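/- arXiv:1910.02263 — 6 statements merged into one kernel-verified Lean document; each statement's English description precedes it below -/
import Mathlib

section
/- If a is an element of a unital C*-algebra A with a² = 0, then for every b∈A, Birkhoff–James orthogonality a ⊥_B b implies numerical radius Birkhoff–James orthogonality a ⊥_B^v b. -/
open scoped ComplexOrder

/-- A state on a unital C*-algebra: a positive linear functional with `φ 1 = 1` and norm 1. -/
def IsState (A : Type*) [CStarAlgebra A] (φ : A →L[ℂ] ℂ) : Prop :=
  (∀ a : A, 0 ≤ φ (star a * a)) ∧ φ 1 = 1 ∧ ‖φ‖ = 1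

/-- The numerical radius `v(a) = sup {|φ(a)| : φ a state}`. -/
noncomputable def nr {A : Type*} [CStarAlgebra A] (a : A) : ℝ :=
  sSup {r : ℝ | ∃ φ : A →L[ℂ] ℂ, IsState A φ ∧ r = ‖φ a‖}

/-- The numerical radius Crawford number `C(b) = inf {|φ(b)| : φ a state}`. -/
noncomputable def crawford {A : Type*} [CStarAlgebra A] (b : A) : ℝ :=
  sInf {r : ℝ | ∃ φ : A →L[ℂ] ℂ, IsState A φ ∧ r = ‖φ b‖}

/-- Numerical radius Birkhoff--James orthogonality: `v(a + λ b) ≥ v(a)` for all `λ ∈ ℂ`. -/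
def nrOrth {A : Type*} [CStarAlgebra A] (a b : A) : Prop :=
  ∀ lam : ℂ, nr a ≤ nr (a + lam • b)

/-- Birkhoff--James orthogonality: `‖a + λ b‖ ≥ ‖a‖` for all `λ ∈ ℂ`. -/
def bjOrth {A : Type*} [CStarAlgebra A] (a b : A) : Prop :=
  ∀ lam : ℂ, ‖a‖ ≤ ‖a + lam • b‖

variable {A : Type*} [CStarAlgebra A]

section MyAux

lemma my_nontrivial (g : A →L[ℂ] ℂ) (hg1 : g 1 = 1) : Nontrivial A := by
  by_contra hcon
  rw [not_nontrivial_iff_subsingleton] at hcon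
  have : (1 : A) = 0 := Subsingleton.elim _ _
  rw [this, map_zero] at hg1
  exact one_ne_zero hg1.symm

lemma my_im_apply_eq_zero (g : A →L[ℂ] ℂ) (hg : ‖g‖ ≤ 1) (hg1 : g 1 = 1)
    {k : A} (hk : IsSelfAdjoint k) : (g k).im = 0 := by
  have hnt : Nontrivial A := my_nontrivial g hg1
  have key : ∀ t : ℝ, (g k).im ^ 2 + 2 * t * (g k).im ≤ ‖k‖ ^ 2 := by
    intro t
    set c : ℂ := (t : ℂ) * Complex.I with hc
    have hcc : c * c = -(((t:ℝ)^2 : ℂ)) := by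
      rw [hc, mul_mul_mul_comm, Complex.I_mul_I]; push_cast; ring
    have hstar : star (k + c • (1 : A)) = k - c • 1 := by
      rw [star_add, star_smul, star_one, hk.star_eq, sub_eq_add_neg, ← neg_smul]
      congr 2
      simp [hc, Complex.ext_iff]
    have hmul : star (k + c • (1 : A)) * (k + c • 1) = k * k + ((t:ℝ)^2 : ℂ) • (1 : A) := by
      rw [hstar]
      have expand : (k - c•(1:A)) * (k + c•1) = k*k + c•k - (c•k + (c*c)•1) := by
        simp only [sub_mul, mul_add, smul_mul_assoc, mul_smul_comm, smul_smul, mul_one, one_mul]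
        module
      rw [expand, hcc]
      module
    have hn : ‖k + c • (1:A)‖^2 ≤ ‖k‖^2 + t^2 := by
      rw [pow_two, ← CStarRing.norm_star_mul_self (x := k + c • (1:A)), hmul]
      calc ‖k * k + ((t:ℝ)^2 : ℂ) • (1 : A)‖ ≤ ‖k * k‖ + ‖((t:ℝ)^2:ℂ) • (1:A)‖ := norm_add_le _ _
        _ ≤ ‖k‖^2 + t^2 := by
            have h1 : ‖k * k‖ ≤ ‖k‖^2 := by rw [pow_two]; exact norm_mul_le _ _
            have h2 : ‖((t:ℝ)^2:ℂ) • (1:A)‖ = t^2 := by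
              rw [norm_smul, norm_one, mul_one]
              simp [sq_abs]
            linarith
    have happ : g (k + c • (1:A)) = g k + c := by
      rw [map_add, map_smul, hg1, smul_eq_mul, mul_one]
    have hgn : ‖g (k + c • (1:A))‖ ≤ ‖k + c • (1:A)‖ := by
      calc ‖g (k + c • (1:A))‖ ≤ ‖g‖ * ‖k + c • (1:A)‖ := g.le_opNorm _
        _ ≤ 1 * ‖k + c • (1:A)‖ := mul_le_mul_of_nonneg_right hg (norm_nonneg _)
        _ = _ := one_mul _
    have h3 : ‖g k + c‖^2 ≤ ‖k‖^2 + t^2 := by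
      rw [← happ]
      calc ‖g (k + c • (1:A))‖^2 ≤ ‖k + c • (1:A)‖^2 := by
            exact pow_le_pow_left₀ (norm_nonneg _) hgn 2
        _ ≤ _ := hn
    have h4 : ‖g k + c‖^2 = (g k).re^2 + ((g k).im + t)^2 := by
      rw [Complex.sq_norm, Complex.normSq_apply]
      simp [hc]
      ring
    rw [h4] at h3
    nlinarith [sq_nonneg ((g k).re)]
  by_contra hne
  set m := (g k).im with hm
  have ht := key ((‖k‖^2 + 1 - m^2) / (2 * m))
  have h2t : 2 * ((‖k‖^2 + 1 - m^2) / (2 * m)) * m = ‖k‖^2 + 1 - m^2 := by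
    field_simp
  linarith

lemma my_decomp (x : A) : ∃ h k : A, IsSelfAdjoint h ∧ IsSelfAdjoint k ∧
    x = h + Complex.I • k ∧ star x = h - Complex.I • k := by
  refine ⟨(2⁻¹ : ℂ) • (x + star x), (-(2⁻¹ : ℂ) * Complex.I) • (x - star x), ?_, ?_, ?_, ?_⟩
  · rw [IsSelfAdjoint, star_smul, star_add, star_star]
    have : star (2⁻¹ : ℂ) = (2⁻¹ : ℂ) := by simp [Complex.ext_iff]
    rw [this, add_comm]
  · rw [IsSelfAdjoint, star_smul, star_sub, star_star]
    have : star (-(2⁻¹:ℂ) * Complex.I) = (2⁻¹:ℂ) * Complex.I := by simp [Complex.ext_iff]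
    rw [this]
    have h2 : ((2⁻¹:ℂ) * Complex.I) • (star x - x) = (-(2⁻¹:ℂ) * Complex.I) • (x - star x) := by
      module
    rw [h2]
  · have hI : Complex.I • ((-(2⁻¹:ℂ) * Complex.I) • (x - star x)) = (2⁻¹:ℂ) • (x - star x) := by
      rw [smul_smul]
      congr 1
      have := Complex.I_mul_I
      ring_nf
      rw [Complex.I_sq]
      ring
    rw [hI]
    module
  · have hI : Complex.I • ((-(2⁻¹:ℂ) * Complex.I) • (x - star x)) = (2⁻¹:ℂ) • (x - star x) := by
      rw [smul_smul]
      congr 1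
      ring_nf
      rw [Complex.I_sq]
      ring
    rw [hI]
    module

lemma my_apply_star (g : A →L[ℂ] ℂ) (hg : ‖g‖ ≤ 1) (hg1 : g 1 = 1) (x : A) :
    g (star x) = starRingEnd ℂ (g x) := by
  obtain ⟨h, k, hh, hk, hx, hxs⟩ := my_decomp x
  have ih : (g h).im = 0 := my_im_apply_eq_zero g hg hg1 hh
  have ik : (g k).im = 0 := my_im_apply_eq_zero g hg hg1 hk
  rw [hxs, hx, map_sub, map_add, map_smul, smul_eq_mul]
  apply Complex.ext <;>
    simp [Complex.add_re, Complex.add_im, Complex.mul_re, Complex.mul_im, ih, ik]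

lemma my_pos [PartialOrder A] [StarOrderedRing A]
    (g : A →L[ℂ] ℂ) (hg : ‖g‖ ≤ 1) (hg1 : g 1 = 1) (x : A) : 0 ≤ g (star x * x) := by
  have hnt : Nontrivial A := my_nontrivial g hg1
  set p := star x * x with hp
  have hsa : IsSelfAdjoint p := IsSelfAdjoint.star_mul_self x
  have hpos : 0 ≤ p := star_mul_self_nonneg x
  set r := ‖p‖ with hr
  have hr0 : (0:ℝ) ≤ r := norm_nonneg _
  have hle : p ≤ algebraMap ℝ A r := hsa.le_algebraMap_norm_self
  have h2 : 0 ≤ algebraMap ℝ A r - p := sub_nonneg.mpr hle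
  have h3 : algebraMap ℝ A r - p ≤ algebraMap ℝ A r := by
    simpa using sub_le_self (algebraMap ℝ A r) hpos
  have h4 : ‖algebraMap ℝ A r - p‖ ≤ r := by
    rw [CStarAlgebra.norm_le_iff_le_algebraMap _ hr0 h2]
    exact h3
  have halg : g (algebraMap ℝ A r) = (r : ℂ) := by
    have : algebraMap ℝ A r = (r : ℂ) • (1 : A) := by
      rw [Algebra.algebraMap_eq_smul_one, ← algebraMap_smul ℂ r (1:A)]
      norm_num
    rw [this, map_smul, hg1, smul_eq_mul, mul_one]
  have h5 : ‖(r:ℂ) - g p‖ ≤ r := by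
    calc ‖(r:ℂ) - g p‖ = ‖g (algebraMap ℝ A r - p)‖ := by rw [map_sub, halg]
      _ ≤ ‖g‖ * ‖algebraMap ℝ A r - p‖ := g.le_opNorm _
      _ ≤ 1 * r := mul_le_mul hg h4 (norm_nonneg _) zero_le_one
      _ = r := one_mul r
  have him : (g p).im = 0 := my_im_apply_eq_zero g hg hg1 hsa
  have hsq : ((r:ℂ) - g p).re^2 + ((r:ℂ) - g p).im^2 ≤ r^2 := by
    have := pow_le_pow_left₀ (norm_nonneg _) h5 2
    rw [Complex.sq_norm, Complex.normSq_apply] at this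
    nlinarith [this]
  simp only [Complex.sub_re, Complex.sub_im, Complex.ofReal_re, Complex.ofReal_im, him] at hsq
  rw [Complex.le_def]
  constructor
  · simp only [Complex.zero_re]
    nlinarith [hsq]
  · simp [him]

set_option maxHeartbeats 1000000 in
lemma my_exists_state [Nontrivial A] (k : A) (hk : IsSelfAdjoint k) :
    ∃ g : A →L[ℂ] ℂ, ‖g‖ ≤ 1 ∧ g 1 = 1 ∧ ‖g k‖ = ‖k‖ := by
  haveI : IsStarNormal k := hk.isStarNormal
  set B := StarAlgebra.elemental ℂ k with hB
  haveI : IsClosed (B : Set A) := StarAlgebra.elemental.isClosed ℂ k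
  obtain ⟨z, hz, hzabs⟩ : ∃ z : ℂ, z ∈ spectrum ℂ k ∧ ‖z‖ = ‖k‖ := by
    rcases CStarAlgebra.norm_or_neg_norm_mem_spectrum (a := k) hk with hmem | hmem
    · refine ⟨(‖k‖ : ℂ), ?_, ?_⟩
      · exact_mod_cast spectrum.algebraMap_mem ℂ hmem
      · simp [abs_of_nonneg (norm_nonneg k)]
    · refine ⟨-(‖k‖ : ℂ), ?_, ?_⟩
      · have := spectrum.algebraMap_mem ℂ hmem
        simpa using this
      · simp [abs_of_nonneg (norm_nonneg k)]
  set kB : B := ⟨k, StarAlgebra.elemental.self_mem ℂ k⟩ with hkB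
  have hzB : z ∈ spectrum ℂ kB := by
    rw [StarSubalgebra.spectrum_eq]
    exact hz
  obtain ⟨χ, hχ⟩ := WeakDual.CharacterSpace.mem_spectrum_iff_exists.mp hzB
  set p : Submodule ℂ A := Subalgebra.toSubmodule B.toSubalgebra with hp
  have memB : ∀ y : p, (y : A) ∈ B := fun y => y.2
  set L : p →ₗ[ℂ] B :=
    { toFun := fun y => ⟨y.1, y.2⟩
      map_add' := fun x y => rfl
      map_smul' := fun c y => rfl } with hL
  set f₀ : p →ₗ[ℂ] ℂ := (χ : WeakDual ℂ B).toLinearMap.comp L with hf₀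
  have hbound : ∀ y : p, ‖f₀ y‖ ≤ 1 * ‖y‖ := by
    intro y
    have hy : f₀ y = χ (L y) := rfl
    have hmem : χ (L y) ∈ spectrum ℂ (L y) := AlgHom.apply_mem_spectrum χ (L y)
    rw [StarSubalgebra.spectrum_eq] at hmem
    have := spectrum.norm_le_norm_of_mem hmem
    rw [hy, one_mul]
    exact this
  set f : p →L[ℂ] ℂ := f₀.mkContinuous 1 hbound with hf
  obtain ⟨g, hgext, hgnorm⟩ := exists_extension_norm_eq p f
  have hfle : ‖f‖ ≤ 1 := f₀.mkContinuous_norm_le zero_le_one hbound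
  have hgle : ‖g‖ ≤ 1 := hgnorm ▸ hfle
  have h1 : g 1 = 1 := by
    have h1m : (1 : A) ∈ p := one_mem B.toSubalgebra
    have := hgext ⟨1, h1m⟩
    rw [this]
    have : f ⟨1, h1m⟩ = χ 1 := rfl
    rw [this, map_one]
  have hk' : g k = z := by
    have hkm : k ∈ p := StarAlgebra.elemental.self_mem ℂ k
    have := hgext ⟨k, hkm⟩
    rw [this]
    have : f ⟨k, hkm⟩ = χ kB := rfl
    rw [this, hχ]
  exact ⟨g, hgle, h1, by rw [hk', hzabs]⟩

lemma my_orth_norm [PartialOrder A] [StarOrderedRing A] (a : A) (ha : a ^ 2 = 0) :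
    ‖a * star a + star a * a‖ ≤ ‖a‖ ^ 2 := by
  set p := a * star a with hp
  set q := star a * a with hq
  have hstar2 : star a * star a = 0 := by
    rw [← star_mul, ← pow_two, ha, star_zero]
  have ha2 : a * a = 0 := by rw [← pow_two]; exact ha
  have hpq : p * q = 0 := by
    rw [hp, hq]
    calc a * star a * (star a * a) = a * (star a * star a) * a := by
          simp only [mul_assoc]
      _ = 0 := by rw [hstar2]; simp
  have hqp : q * p = 0 := by
    rw [hp, hq]
    calc star a * a * (a * star a) = star a * (a * a) * star a := by
          simp only [mul_assoc]
      _ = 0 := by rw [ha2]; simp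
  have hppos : 0 ≤ p := mul_star_self_nonneg a
  have hqpos : 0 ≤ q := star_mul_self_nonneg a
  have hpsa : IsSelfAdjoint p := IsSelfAdjoint.mul_star_self a
  have hqsa : IsSelfAdjoint q := IsSelfAdjoint.star_mul_self a
  set s := p + q with hs
  have hssa : IsSelfAdjoint s := hpsa.add hqsa
  have hspos : 0 ≤ s := add_nonneg hppos hqpos
  have hs2 : s * s = p * p + q * q := by
    rw [hs, add_mul, mul_add, mul_add, hpq, hqp]
    abel
  set M := ‖a‖ ^ 2 with hM
  have hpnorm : ‖p‖ = M := by rw [hp, CStarRing.norm_self_mul_star, hM, pow_two]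
  have hqnorm : ‖q‖ = M := by rw [hq, CStarRing.norm_star_mul_self, hM, pow_two]
  -- p * p ≤ ‖p‖ • p
  have sqle : ∀ w : A, 0 ≤ w → w * w ≤ ‖w‖ • w := by
    intro w hw
    set r := CFC.sqrt w with hr
    have hsqrt : r * r = w := CFC.sqrt_mul_sqrt_self w hw
    have hsa : IsSelfAdjoint r := IsSelfAdjoint.of_nonneg (CFC.sqrt_nonneg w)
    have hconj := CStarAlgebra.star_left_conjugate_le_norm_smul (a := r) (b := w)
      (IsSelfAdjoint.of_nonneg hw)
    rw [hsa.star_eq] at hconj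
    calc w * w = r * w * r := by
          rw [← hsqrt]
          simp only [mul_assoc]
      _ ≤ ‖w‖ • (r * r) := hconj
      _ = ‖w‖ • w := by rw [hsqrt]
  have hle : s * s ≤ M • s := by
    rw [hs2]
    calc p * p + q * q ≤ ‖p‖ • p + ‖q‖ • q := add_le_add (sqle p hppos) (sqle q hqpos)
      _ = M • s := by rw [hpnorm, hqnorm, hs, smul_add]
  have hM0 : 0 ≤ M := by positivity
  have hnorm : ‖s * s‖ ≤ M * ‖s‖ := by
    have h2pos : 0 ≤ s * s := by
      nth_rewrite 1 [← hssa.star_eq]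
      exact star_mul_self_nonneg s
    calc ‖s * s‖ ≤ ‖M • s‖ :=
          CStarAlgebra.norm_le_norm_of_nonneg_of_le h2pos hle
      _ = M * ‖s‖ := by rw [norm_smul, Real.norm_eq_abs, abs_of_nonneg hM0]
  have hss : ‖s * s‖ = ‖s‖ * ‖s‖ := by
    nth_rewrite 1 [← hssa.star_eq]
    exact CStarRing.norm_star_mul_self
  rcases eq_or_lt_of_le (norm_nonneg s) with h0 | h0
  · rw [← h0]; exact hM0
  · rw [hss] at hnorm
    exact le_of_mul_le_mul_right hnorm h0

lemma my_abs_le_half (g : A →L[ℂ] ℂ) (hg : ‖g‖ ≤ 1) (hg1 : g 1 = 1)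
    (a : A) (ha : a ^ 2 = 0) : ‖g a‖ ≤ ‖a‖ / 2 := by
  letI := CStarAlgebra.spectralOrder A
  letI := CStarAlgebra.spectralOrderedRing A
  rcases eq_or_ne (g a) 0 with hz | hz
  · rw [hz]
    simp
    positivity
  set z := g a with hzz
  have habs0 : (0:ℝ) < ‖z‖ := by
    simpa [norm_pos_iff] using hz
  set c : ℂ := starRingEnd ℂ z / (‖z‖ : ℂ) with hc
  have hcz : c * z = (‖z‖ : ℂ) := by
    have hne : ((‖z‖ : ℝ) : ℂ) ≠ 0 := Complex.ofReal_ne_zero.mpr habs0.ne'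
    rw [hc, div_mul_eq_mul_div, mul_comm, Complex.mul_conj, Complex.normSq_eq_norm_sq]
    push_cast
    rw [sq, mul_div_assoc, div_self hne, mul_one]
  have hcabs : ‖c‖ = 1 := by
    rw [hc, norm_div, Complex.norm_conj, Complex.norm_real, norm_norm]
    field_simp
  have hcc1 : c * star c = 1 := by
    rw [show (star c : ℂ) = starRingEnd ℂ c from rfl, Complex.mul_conj,
      Complex.normSq_eq_norm_sq, hcabs]
    norm_num
  have ha2 : a * a = 0 := by rw [← pow_two]; exact ha
  have hstar2 : star a * star a = 0 := by rw [← star_mul, ← pow_two, ha, star_zero]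
  set h := c • a + star (c • a) with hh
  have hsa : IsSelfAdjoint h := IsSelfAdjoint.add_star_self (c • a)
  have hmul : h * h = a * star a + star a * a := by
    rw [hh, star_smul]
    simp only [add_mul, mul_add, smul_mul_assoc, mul_smul_comm, smul_smul, ha2, hstar2,
      smul_zero, zero_add, add_zero, star_star]
    rw [hcc1, mul_comm (star c) c, hcc1, one_smul, one_smul, add_comm]
  have hnorm : ‖h‖ ≤ ‖a‖ := by
    have h1 : ‖h‖ * ‖h‖ = ‖h * h‖ := by
      nth_rewrite 3 [← hsa.star_eq]
      exact (CStarRing.norm_star_mul_self).symm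
    have h2 : ‖h * h‖ ≤ ‖a‖ ^ 2 := by rw [hmul]; exact my_orth_norm a ha
    nlinarith [norm_nonneg h, norm_nonneg a]
  have hgh : g h = 2 * (‖z‖ : ℂ) := by
    rw [hh, map_add, my_apply_star g hg hg1, map_smul, smul_eq_mul, ← hzz, hcz,
      Complex.conj_ofReal]
    ring
  have hineq : ‖g h‖ ≤ ‖a‖ := by
    calc ‖g h‖ ≤ ‖g‖ * ‖h‖ := g.le_opNorm h
      _ ≤ 1 * ‖a‖ := mul_le_mul hg hnorm (norm_nonneg _) zero_le_one
      _ = ‖a‖ := one_mul _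
  rw [hgh] at hineq
  have : ‖(2 : ℂ) * (‖z‖ : ℂ)‖ = 2 * ‖z‖ := by
    rw [norm_mul]
    simp [Complex.norm_real, abs_of_pos habs0]
  rw [this] at hineq
  linarith

lemma my_bdd (x : A) :
    BddAbove {r : ℝ | ∃ φ : A →L[ℂ] ℂ, IsState A φ ∧ r = ‖φ x‖} := by
  refine ⟨‖x‖, ?_⟩
  rintro r ⟨φ, hφ, rfl⟩
  calc ‖φ x‖ = ‖φ x‖ := rfl
    _ ≤ ‖φ‖ * ‖x‖ := φ.le_opNorm x
    _ = ‖x‖ := by rw [hφ.2.2, one_mul]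

lemma my_le_nr {φ : A →L[ℂ] ℂ} (hφ : IsState A φ) (x : A) :
    ‖φ x‖ ≤ nr x :=
  le_csSup (my_bdd x) ⟨φ, hφ, rfl⟩

lemma my_isState_of (g : A →L[ℂ] ℂ) (hg : ‖g‖ ≤ 1) (hg1 : g 1 = 1) : IsState A g := by
  letI := CStarAlgebra.spectralOrder A
  letI := CStarAlgebra.spectralOrderedRing A
  refine ⟨fun x => my_pos g hg hg1 x, hg1, le_antisymm hg ?_⟩
  haveI : Nontrivial A := my_nontrivial g hg1
  calc (1:ℝ) = ‖g 1‖ := by rw [hg1]; simp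
    _ ≤ ‖g‖ * ‖(1:A)‖ := g.le_opNorm 1
    _ = ‖g‖ := by rw [norm_one, mul_one]

lemma my_norm_le_two_nr (x : A) (φ : A →L[ℂ] ℂ) (hφ : IsState A φ) :
    ‖x‖ ≤ 2 * nr x := by
  haveI : Nontrivial A := my_nontrivial φ hφ.2.1
  obtain ⟨h, k, hh, hk, hx, -⟩ := my_decomp x
  obtain ⟨g1, hg1le, hg11, hg1abs⟩ := my_exists_state h hh
  obtain ⟨g2, hg2le, hg21, hg2abs⟩ := my_exists_state k hk
  have e1 : ‖h‖ ≤ nr x := by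
    have im1 : (g1 h).im = 0 := my_im_apply_eq_zero g1 hg1le hg11 hh
    have im2 : (g1 k).im = 0 := my_im_apply_eq_zero g1 hg1le hg11 hk
    have hre : (g1 x).re = (g1 h).re := by
      rw [hx, map_add, map_smul, smul_eq_mul]
      simp [Complex.add_re, Complex.mul_re, im2]
    have habs : ‖g1 h‖ = |(g1 h).re| := by
      have : g1 h = ((g1 h).re : ℂ) := Complex.ext rfl (by simp [im1])
      rw [this, Complex.norm_real]
      simp
    calc ‖h‖ = |(g1 h).re| := by rw [← hg1abs, habs]
      _ = |(g1 x).re| := by rw [hre]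
      _ ≤ ‖g1 x‖ := Complex.abs_re_le_norm _
      _ ≤ nr x := my_le_nr (my_isState_of g1 hg1le hg11) x
  have e2 : ‖k‖ ≤ nr x := by
    have im1 : (g2 h).im = 0 := my_im_apply_eq_zero g2 hg2le hg21 hh
    have im2 : (g2 k).im = 0 := my_im_apply_eq_zero g2 hg2le hg21 hk
    have hre : (g2 x).im = (g2 k).re := by
      rw [hx, map_add, map_smul, smul_eq_mul]
      simp [Complex.add_im, Complex.mul_im, im1, im2]
    have habs : ‖g2 k‖ = |(g2 k).re| := by
      have : g2 k = ((g2 k).re : ℂ) := Complex.ext rfl (by simp [im2])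
      rw [this, Complex.norm_real]
      simp
    calc ‖k‖ = |(g2 k).re| := by rw [← hg2abs, habs]
      _ = |(g2 x).im| := by rw [hre]
      _ ≤ ‖g2 x‖ := Complex.abs_im_le_norm _
      _ ≤ nr x := my_le_nr (my_isState_of g2 hg2le hg21) x
  have hxn : ‖x‖ ≤ ‖h‖ + ‖k‖ := by
    calc ‖x‖ = ‖h + Complex.I • k‖ := by rw [← hx]
      _ ≤ ‖h‖ + ‖Complex.I • k‖ := norm_add_le _ _
      _ = ‖h‖ + ‖k‖ := by rw [norm_smul, Complex.norm_I, one_mul]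
  linarith


end MyAux

theorem stmt3 (a b : A) (ha : a ^ 2 = 0) (h : bjOrth a b) : nrOrth a b := by
  intro lam
  have hnn : (0:ℝ) ≤ nr (a + lam • b) := by
    apply Real.sSup_nonneg
    rintro r ⟨φ, hφ, rfl⟩
    exact norm_nonneg _
  apply Real.sSup_le _ hnn
  rintro r ⟨φ, hφ, rfl⟩
  have hle1 : ‖φ‖ ≤ 1 := le_of_eq hφ.2.2
  have h1 : ‖φ a‖ ≤ ‖a‖ / 2 := my_abs_le_half φ hle1 hφ.2.1 a ha
  have h2 : ‖a‖ ≤ ‖a + lam • b‖ := h lam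
  have h3 : ‖a + lam • b‖ ≤ 2 * nr (a + lam • b) := my_norm_le_two_nr _ φ hφ
  linarith
end

section
/- For positive elements a, b of a unital C*-algebra A, numerical radius Birkhoff–James orthogonality a ⊥_B^v b holds if and only if Birkhoff–James orthogonality a ⊥_B b holds. -/
open scoped ComplexOrder

variable {A : Type*} [CStarAlgebra A]


lemma complex_eq_of_abs_le_of_re_eq {w : ℂ} {c : ℝ} (h1 : ‖w‖ ≤ c) (h2 : w.re = c) :
    w = (c : ℂ) := by
  have h3 : w.re ^ 2 + w.im ^ 2 = ‖w‖ ^ 2 := by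
    rw [Complex.sq_norm, Complex.normSq_apply]; ring
  have h4 : w.im = 0 := by nlinarith [norm_nonneg w]
  exact Complex.ext (by simp [h2]) (by simp [h4])

lemma im_eq_zero_of_norm_le [Nontrivial A] (φ : A →L[ℂ] ℂ) (hφ1 : φ 1 = 1) (hφn : ‖φ‖ ≤ 1)
    {x : A} (hx : IsSelfAdjoint x) : (φ x).im = 0 := by
  have key : ∀ n : ℝ, (φ x).re ^ 2 + ((φ x).im + n) ^ 2 ≤ ‖x‖ ^ 2 + n ^ 2 := by
    intro n
    set w : ℂ := (n : ℂ) * Complex.I with hw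
    have h1 : φ (x + w • 1) = φ x + w := by
      simp [map_add, map_smul, hφ1, smul_eq_mul]
    have hsw : star w = -w := by simp [hw, Complex.ext_iff]
    have hst : star (x + w • 1) * (x + w • 1) = x * x + ((n : ℂ)^2) • 1 := by
      have e1 : star (x + w • 1) = x - w • 1 := by
        rw [star_add, star_smul, hx.star_eq, star_one, hsw, neg_smul, sub_eq_add_neg]
      rw [e1]
      have e2 : (x - w • 1) * (x + w • 1) = x * x - (w * w) • 1 := by
        simp only [sub_mul, mul_add, smul_add, smul_mul_assoc, mul_smul_comm, smul_smul,
          mul_one, one_mul, neg_smul, one_smul, neg_one_smul]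
        module
      rw [e2]
      have e3 : -(w * w) = ((n:ℂ)^2) := by rw [hw]; ring_nf; simp [Complex.I_sq]
      rw [sub_eq_add_neg, ← neg_smul, e3]
    have h2 : ‖x + w • 1‖ ^ 2 ≤ ‖x‖ ^ 2 + n ^ 2 := by
      have e4 : ‖x + w • 1‖ ^ 2 = ‖star (x + w • 1) * (x + w • 1)‖ := by
        rw [CStarRing.norm_star_mul_self, sq]
      rw [e4, hst]
      calc ‖x * x + ((n:ℂ)^2) • (1:A)‖ ≤ ‖x * x‖ + ‖((n:ℂ)^2) • (1:A)‖ := norm_add_le _ _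
        _ ≤ ‖x‖^2 + n^2 := by
            rw [norm_smul, norm_one, mul_one]
            have e5 : ‖x * x‖ ≤ ‖x‖^2 := by
              calc ‖x * x‖ ≤ ‖x‖ * ‖x‖ := norm_mul_le _ _
                _ = ‖x‖^2 := (sq ‖x‖).symm
            have e6 : ‖((n:ℂ)^2)‖ = n^2 := by
              rw [norm_pow, Complex.norm_real, Real.norm_eq_abs, sq_abs]
            linarith
    have h3 : ‖φ x + w‖ ≤ ‖x + w • 1‖ := by
      calc ‖φ x + w‖ = ‖φ x + w‖ := rfl
        _ ≤ ‖φ‖ * ‖x + w • 1‖ := by rw [← h1]; exact φ.le_opNorm _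
        _ ≤ 1 * ‖x + w • 1‖ := by gcongr
        _ = _ := one_mul _
    have h4 : ‖φ x + w‖ ^ 2 = (φ x).re ^ 2 + ((φ x).im + n) ^ 2 := by
      rw [Complex.sq_norm, Complex.normSq_apply]
      simp [hw]
      ring
    have h5 : ‖φ x + w‖ ^ 2 ≤ ‖x + w • 1‖ ^ 2 := by
      have := mul_le_mul h3 h3 (norm_nonneg _) (norm_nonneg _)
      nlinarith
    linarith
  by_contra him
  have h5 := key ((‖x‖^2 + 1) / (2 * (φ x).im))
  have h6 : 2 * (φ x).im * ((‖x‖^2 + 1) / (2 * (φ x).im)) = ‖x‖^2 + 1 := by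
    field_simp
  nlinarith [h5, h6, sq_nonneg (φ x).re, sq_nonneg (φ x).im]

lemma isState_of_norm_one [Nontrivial A] (φ : A →L[ℂ] ℂ) (hφ1 : φ 1 = 1) (hφn : ‖φ‖ = 1) :
    IsState A φ := by
  refine ⟨fun c => ?_, hφ1, hφn⟩
  set x := star c * c with hxdef
  have hx : IsSelfAdjoint x := IsSelfAdjoint.star_mul_self c
  have him : (φ x).im = 0 := im_eq_zero_of_norm_le φ hφ1 hφn.le hx
  set t := ‖x‖ with ht
  have hbound : ‖x - t • 1‖ ≤ t := by
    have e : x - t • 1 = cfc (fun r : ℝ => r - t) x := by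
      rw [cfc_sub (fun r : ℝ => r) (fun _ => t) x, cfc_id' (R := ℝ) (ha := hx),
        cfc_const t x hx, Algebra.algebraMap_eq_smul_one]
    rw [e]
    refine norm_cfc_le (norm_nonneg x) (fun r hr => ?_)
    have h0 : 0 ≤ r := spectrum_star_mul_self_nonneg r hr
    have h1 : r ≤ t := (le_abs_self r).trans (Real.norm_eq_abs r ▸ spectrum.norm_le_norm_of_mem hr)
    rw [Real.norm_eq_abs, abs_le]
    constructor <;> linarith
  have habs : ‖φ x - (t : ℂ)‖ ≤ t := by
    have e : φ x - (t : ℂ) = φ (x - t • 1) := by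
      rw [map_sub, ← algebraMap_smul ℂ t (1:A), Complex.coe_algebraMap, map_smul, hφ1,
        smul_eq_mul, mul_one]
    rw [e]
    calc ‖φ (x - t • 1)‖ = ‖φ (x - t • 1)‖ := rfl
      _ ≤ ‖φ‖ * ‖x - t • 1‖ := φ.le_opNorm _
      _ ≤ t := by rw [hφn, one_mul]; exact hbound
  have hre : 0 ≤ (φ x).re := by
    have := Complex.abs_re_le_norm (φ x - (t : ℂ))
    simp only [Complex.sub_re, Complex.ofReal_re] at this
    have := abs_le.mp (this.trans habs)
    linarith [this.1]
  have : φ x = ((φ x).re : ℂ) := Complex.ext rfl (by simp [him])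
  rw [this]
  exact Complex.zero_le_real.mpr hre

lemma exists_state_eq_norm_of_mem [Nontrivial A] {x : A}
    (hsp : (‖x‖ : ℂ) ∈ spectrum ℂ x) :
    ∃ φ : A →L[ℂ] ℂ, IsState A φ ∧ φ x = (‖x‖ : ℂ) := by
  by_cases hx0 : x = 0
  · obtain ⟨φ, hφn, hφ1⟩ := exists_dual_vector ℂ (1 : A) (norm_ne_zero_iff.mpr one_ne_zero)
    rw [norm_one] at hφ1
    refine ⟨φ, isState_of_norm_one φ hφ1 hφn, ?_⟩
    simp [hx0]
  · set t := ‖x‖ with ht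
    have htpos : 0 < t := norm_pos_iff.mpr hx0
    set y := (t : ℂ) • (1 : A) + x with hy
    have hyspec : ((2 * t : ℝ) : ℂ) ∈ spectrum ℂ y := by
      have := (spectrum.singleton_add_eq x (t : ℂ)).symm ▸ Set.add_mem_add
        (Set.mem_singleton ((t : ℂ))) hsp
      rw [Algebra.algebraMap_eq_smul_one] at this
      convert this using 2
      push_cast; ring
    have hynorm : ‖y‖ = 2 * t := by
      refine le_antisymm ?_ ?_
      · calc ‖y‖ ≤ ‖(t:ℂ) • (1:A)‖ + ‖x‖ := norm_add_le _ _
          _ = 2 * t := by rw [norm_smul, norm_one, mul_one, Complex.norm_real,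
              Real.norm_eq_abs, abs_of_pos htpos]; ring
      · have := spectrum.norm_le_norm_of_mem hyspec
        rw [Complex.norm_real, Real.norm_eq_abs, abs_of_pos (by linarith)] at this
        exact this
    have hy0 : y ≠ 0 := by
      intro h
      rw [h, norm_zero] at hynorm
      linarith
    obtain ⟨φ, hφn, hφy⟩ := exists_dual_vector ℂ y (norm_ne_zero_iff.mpr hy0)
    rw [hynorm] at hφy
    have hφx_le : ‖φ x‖ ≤ t := by
      calc ‖φ x‖ = ‖φ x‖ := rfl
        _ ≤ ‖φ‖ * ‖x‖ := φ.le_opNorm _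
        _ = t := by rw [hφn, one_mul]
    have hφ1_le : ‖φ 1‖ ≤ 1 := by
      calc ‖φ 1‖ = ‖φ 1‖ := rfl
        _ ≤ ‖φ‖ * ‖(1:A)‖ := φ.le_opNorm _
        _ = 1 := by rw [hφn, norm_one, one_mul]
    have hsum : t * (φ 1).re + (φ x).re = 2 * t := by
      have : φ y = (t : ℂ) * φ 1 + φ x := by
        rw [hy, map_add, map_smul, smul_eq_mul]
      rw [this] at hφy
      have := congrArg Complex.re hφy
      simpa using this
    have hre1 : (φ 1).re ≤ 1 := (Complex.re_le_norm _).trans hφ1_le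
    have hrex : (φ x).re ≤ t := (Complex.re_le_norm _).trans hφx_le
    have h1eq : (φ 1).re = 1 := by nlinarith
    have hxeq : (φ x).re = t := by nlinarith
    have hφ1 : φ 1 = 1 := by
      simpa using complex_eq_of_abs_le_of_re_eq hφ1_le h1eq
    refine ⟨φ, isState_of_norm_one φ hφ1 hφn, ?_⟩
    exact complex_eq_of_abs_le_of_re_eq hφx_le hxeq

lemma exists_state_abs_eq [Nontrivial A] {x : A} (hx : IsSelfAdjoint x) :
    ∃ φ : A →L[ℂ] ℂ, IsState A φ ∧ ‖φ x‖ = ‖x‖ := by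
  obtain ⟨z, hz, hz'⟩ := spectrum.exists_nnnorm_eq_spectralRadius (a := x)
  rw [hx.spectralRadius_eq_nnnorm] at hz'
  have hznorm : ‖z‖ = ‖x‖ := by exact_mod_cast congrArg ENNReal.toReal hz'
  have hzre : z = (z.re : ℂ) := hx.mem_spectrum_eq_re hz
  rcases le_or_gt 0 z.re with hpos | hneg
  · have : (‖x‖ : ℂ) ∈ spectrum ℂ x := by
      have : z.re = ‖x‖ := by
        rw [← hznorm, hzre]
        simp [Complex.norm_real, Real.norm_eq_abs, abs_of_nonneg hpos]
      rw [← this, ← hzre]; exact hz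
    obtain ⟨φ, hφ, hφx⟩ := exists_state_eq_norm_of_mem this
    exact ⟨φ, hφ, by rw [hφx]; simp [Complex.norm_of_nonneg, abs_of_nonneg (norm_nonneg x)]⟩
  · have hnx : IsSelfAdjoint (-x) := hx.neg
    have : (‖-x‖ : ℂ) ∈ spectrum ℂ (-x) := by
      have h1 : -z ∈ spectrum ℂ (-x) := by
        rw [← spectrum.neg_eq]; exact Set.neg_mem_neg.mpr hz
      have h2 : -z = (‖-x‖ : ℂ) := by
        rw [norm_neg, ← hznorm, hzre]
        simp only [Complex.norm_real, Real.norm_eq_abs, Complex.ofReal_re, abs_of_neg hneg]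
        push_cast
        ring
      rw [← h2]; exact h1
    obtain ⟨φ, hφ, hφx⟩ := exists_state_eq_norm_of_mem this
    refine ⟨φ, hφ, ?_⟩
    have : φ x = -(‖x‖ : ℂ) := by
      have := hφx
      rw [map_neg, norm_neg] at this
      linear_combination -this
    rw [this]
    simp [abs_of_nonneg (norm_nonneg x)]

lemma nr_mem_le {y : A} {r : ℝ}
    (hr : r ∈ {r : ℝ | ∃ φ : A →L[ℂ] ℂ, IsState A φ ∧ r = ‖φ y‖}) : r ≤ ‖y‖ := by
  obtain ⟨φ, hφ, rfl⟩ := hr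
  calc ‖φ y‖ = ‖φ y‖ := rfl
    _ ≤ ‖φ‖ * ‖y‖ := φ.le_opNorm _
    _ = ‖y‖ := by rw [hφ.2.2, one_mul]

lemma nr_le_norm (y : A) : nr y ≤ ‖y‖ :=
  Real.sSup_le (fun _ hr => nr_mem_le hr) (norm_nonneg y)

lemma abs_le_nr {y : A} {φ : A →L[ℂ] ℂ} (hφ : IsState A φ) : ‖φ y‖ ≤ nr y :=
  le_csSup ⟨‖y‖, fun _ hr => nr_mem_le hr⟩ ⟨φ, hφ, rfl⟩

lemma state_re_nonneg {y : A} (hy : ∃ c : A, y = star c * c) {φ : A →L[ℂ] ℂ}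
    (hφ : IsState A φ) : 0 ≤ (φ y).re ∧ (φ y).im = 0 := by
  obtain ⟨c, rfl⟩ := hy
  have := hφ.1 c
  rw [Complex.le_def] at this
  exact ⟨by simpa using this.1, by simpa using this.2.symm⟩

theorem stmt10 (a b : A) (ha : ∃ c : A, a = star c * c) (hb : ∃ c : A, b = star c * c) :
    nrOrth a b ↔ bjOrth a b := by
  rcases subsingleton_or_nontrivial A with hA | hA
  · constructor <;> intro _ lam <;>
      · have h : a + lam • b = a := Subsingleton.elim _ _
        rw [h]
  · have hsa : IsSelfAdjoint a := by obtain ⟨c, rfl⟩ := ha; exact .star_mul_self c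
    have hsb : IsSelfAdjoint b := by obtain ⟨c, rfl⟩ := hb; exact .star_mul_self c
    constructor
    · intro h lam
      obtain ⟨φ, hφ, hφa⟩ := exists_state_abs_eq hsa
      calc ‖a‖ = ‖φ a‖ := hφa.symm
        _ ≤ nr a := abs_le_nr hφ
        _ ≤ nr (a + lam • b) := h lam
        _ ≤ ‖a + lam • b‖ := nr_le_norm _
    · intro h lam
      set s : ℝ := lam.re with hs
      have hssa : IsSelfAdjoint ((s : ℂ)) := Complex.conj_ofReal s
      have hx : IsSelfAdjoint (a + (s : ℂ) • b) := hsa.add (hssa.smul hsb)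
      obtain ⟨φ, hφ, hφx⟩ := exists_state_abs_eq hx
      obtain ⟨hra, hia⟩ := state_re_nonneg ha hφ
      obtain ⟨hrb, hib⟩ := state_re_nonneg hb hφ
      have hφxval : φ (a + (s : ℂ) • b) = φ a + (s : ℂ) * φ b := by
        rw [map_add, map_smul, smul_eq_mul]
      have hre_x : (φ (a + (s : ℂ) • b)).re = (φ a).re + s * (φ b).re := by
        rw [hφxval]
        simp [Complex.add_re, Complex.mul_re, hib]
      have him_x : (φ (a + (s : ℂ) • b)).im = 0 := by
        rw [hφxval]
        simp [Complex.add_im, Complex.mul_im, hia, hib]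
      have habs_x : ‖φ (a + (s : ℂ) • b)‖ = |(φ a).re + s * (φ b).re| := by
        have : φ (a + (s : ℂ) • b) = (((φ a).re + s * (φ b).re : ℝ) : ℂ) :=
          Complex.ext (by simp [hre_x]) (by simpa using him_x)
        rw [this, Complex.norm_real, Real.norm_eq_abs]
      have hre_lam : (φ (a + lam • b)).re = (φ a).re + s * (φ b).re := by
        rw [map_add, map_smul, smul_eq_mul]
        simp [Complex.add_re, Complex.mul_re, hib, hs]
      calc nr a ≤ ‖a‖ := nr_le_norm a
        _ ≤ ‖a + (s : ℂ) • b‖ := h ((s : ℂ))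
        _ = ‖φ (a + (s : ℂ) • b)‖ := hφx.symm
        _ = |(φ a).re + s * (φ b).re| := habs_x
        _ = |(φ (a + lam • b)).re| := by rw [hre_lam]
        _ ≤ ‖φ (a + lam • b)‖ := Complex.abs_re_le_norm _
        _ ≤ nr (a + lam • b) := abs_le_nr hφ
end

section
/- Let a, b be nonzero elements of a unital C*-algebra A. Then the right Gateaux derivative of the numerical radius norm satisfies ρ₊^v(a,b) = max{ Re(conj(φ(a))·φ(b)) : φ a state on A with |φ(a)| = v(a) }, and the maximum is attained. -/
set_option maxHeartbeats 2000000

open scoped Pointwise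


open scoped ComplexOrder

variable {A : Type*} [CStarAlgebra A]

lemma norm_algebraMap_norm_sub_le [Nontrivial A] (x : A)
    (hx : IsSelfAdjoint x) (hsp : ∀ r ∈ spectrum ℝ x, 0 ≤ r) :
    ‖algebraMap ℝ A ‖x‖ - x‖ ≤ ‖x‖ := by
  have hy : IsSelfAdjoint (algebraMap ℝ A ‖x‖ - x) :=
    (IsSelfAdjoint.algebraMap A (star_trivial _)).sub hx
  rw [← hy.toReal_spectralRadius_eq_norm]
  have hb : spectralRadius ℝ (algebraMap ℝ A ‖x‖ - x) ≤ (‖x‖₊ : ENNReal) := by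
    rw [spectralRadius]
    refine iSup₂_le fun k hk => ?_
    rw [← spectrum.singleton_sub_eq] at hk
    obtain ⟨r, hr, s, hs, rfl⟩ := Set.mem_sub.mp hk
    rw [Set.mem_singleton_iff] at hr
    subst hr
    have h1 : 0 ≤ s := hsp s hs
    have h2 : s ≤ ‖x‖ := le_trans (le_abs_self s) (spectrum.norm_le_norm_of_mem hs)
    have : ‖‖x‖ - s‖ ≤ ‖x‖ := by
      rw [Real.norm_eq_abs, abs_le]
      constructor <;> linarith
    exact_mod_cast ENNReal.coe_le_coe.mpr (by rwa [← NNReal.coe_le_coe, coe_nnnorm, coe_nnnorm])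
  calc (spectralRadius ℝ (algebraMap ℝ A ‖x‖ - x)).toReal
      ≤ ((‖x‖₊ : ENNReal)).toReal := ENNReal.toReal_mono (by simp) hb
    _ = ‖x‖ := by simp

lemma im_apply_eq_zero (φ : A →L[ℂ] ℂ) (h1 : φ 1 = 1) (hn : ‖φ‖ ≤ 1)
    {x : A} (hx : IsSelfAdjoint x) : (φ x).im = 0 := by
  have hnt : (1 : A) ≠ 0 := by
    intro h
    rw [h, map_zero] at h1
    exact one_ne_zero h1.symm
  haveI : Nontrivial A := nontrivial_of_ne 1 0 hnt
  have key : ∀ n : ℝ, 2 * n * (φ x).im ≤ ‖x‖ ^ 2 := by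
    intro n
    set w : ℂ := (n : ℂ) * Complex.I with hw
    have e1 : φ (x + w • 1) = φ x + w := by
      rw [map_add, map_smul, h1, smul_eq_mul, mul_one]
    have hstar : star (x + w • 1) = x - w • 1 := by
      rw [star_add, star_smul, star_one, hx.star_eq, hw]
      simp [sub_eq_add_neg]
    have hsm : w • (1 : A) = algebraMap ℂ A w := (Algebra.algebraMap_eq_smul_one w).symm
    have hprod : star (x + w • 1) * (x + w • 1) = x * x + ((n : ℂ) ^ 2) • 1 := by
      rw [hstar, hsm, sub_mul, mul_add, mul_add, ← Algebra.commutes w x, ← map_mul]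
      have hww : w * w = -((n : ℂ) ^ 2) := by
        rw [hw]; ring_nf; rw [Complex.I_sq]; ring
      simp only [hww, map_neg, Algebra.algebraMap_eq_smul_one]
      abel
    have hcs := CStarRing.norm_star_mul_self (x := x + w • 1)
    rw [hprod] at hcs
    have hxx : ‖x * x‖ = ‖x‖ ^ 2 := by
      have h := CStarRing.norm_star_mul_self (x := x)
      rw [hx.star_eq] at h
      rw [h]; ring
    have hb : ‖x * x + ((n : ℂ) ^ 2) • 1‖ ≤ ‖x‖ ^ 2 + n ^ 2 := by
      refine le_trans (norm_add_le _ _) ?_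
      have hn1 : ‖((n : ℂ) ^ 2) • (1 : A)‖ = n ^ 2 := by
        rw [norm_smul, norm_one, mul_one]
        simp [norm_pow, sq_abs]
      rw [hxx, hn1]
    have h2 : ‖x + w • 1‖ ^ 2 ≤ ‖x‖ ^ 2 + n ^ 2 := by
      calc ‖x + w • 1‖ ^ 2 = ‖x + w • 1‖ * ‖x + w • 1‖ := sq _
        _ = ‖x * x + ((n : ℂ) ^ 2) • 1‖ := hcs.symm
        _ ≤ ‖x‖ ^ 2 + n ^ 2 := hb
    have h3 : ‖φ x + w‖ ≤ ‖x + w • 1‖ := by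
      rw [← e1]
      calc ‖φ (x + w • 1)‖ ≤ ‖φ‖ * ‖x + w • 1‖ := φ.le_opNorm _
        _ ≤ 1 * ‖x + w • 1‖ := by gcongr
        _ = ‖x + w • 1‖ := one_mul _
    have h4 : ‖φ x + w‖ ^ 2 ≤ ‖x‖ ^ 2 + n ^ 2 :=
      le_trans (by gcongr) h2
    have h5 : ‖φ x + w‖ ^ 2
        = (φ x).re ^ 2 + ((φ x).im + n) ^ 2 := by
      rw [Complex.sq_norm, Complex.normSq_apply]
      simp only [hw, Complex.add_re, Complex.add_im, Complex.mul_re, Complex.mul_im,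
        Complex.I_re, Complex.I_im, Complex.ofReal_re, Complex.ofReal_im]
      ring
    nlinarith [sq_nonneg (φ x).re, sq_nonneg (φ x).im]
  by_contra hy
  have h2y : 2 * (φ x).im ≠ 0 := by
    intro h; apply hy; linarith [h]
  have heq : 2 * ((‖x‖ ^ 2 + 1) / (2 * (φ x).im)) * (φ x).im = ‖x‖ ^ 2 + 1 := by
    field_simp
  linarith [key ((‖x‖ ^ 2 + 1) / (2 * (φ x).im))]

lemma isState_of_unital (φ : A →L[ℂ] ℂ) (h1 : φ 1 = 1) (hn : ‖φ‖ ≤ 1) :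
    IsState A φ := by
  have hnt : (1 : A) ≠ 0 := by
    intro h
    rw [h, map_zero] at h1
    exact one_ne_zero h1.symm
  haveI : Nontrivial A := nontrivial_of_ne 1 0 hnt
  have hnorm : ‖φ‖ = 1 := by
    refine le_antisymm hn ?_
    have := φ.le_opNorm 1
    rw [h1, norm_one, norm_one, mul_one] at this
    exact this
  refine ⟨fun c => ?_, h1, hnorm⟩
  set x := star c * c with hxdef
  have hx : IsSelfAdjoint x := IsSelfAdjoint.star_mul_self c
  have him : (φ x).im = 0 := im_apply_eq_zero φ h1 hn hx
  -- real part nonneg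
  have hsp : ∀ r ∈ spectrum ℝ x, 0 ≤ r := spectrum_star_mul_self_nonneg
  have hkey : ‖(‖x‖ : ℂ) - φ x‖ ≤ ‖x‖ := by
    have e1 : φ (algebraMap ℝ A ‖x‖ - x) = (‖x‖ : ℂ) - φ x := by
      rw [map_sub]
      congr 1
      rw [IsScalarTower.algebraMap_apply ℝ ℂ A, Algebra.algebraMap_eq_smul_one,
        map_smul, h1, smul_eq_mul, mul_one]
      simp [Complex.coe_algebraMap]
    rw [← e1]
    calc ‖φ (algebraMap ℝ A ‖x‖ - x)‖ ≤ ‖φ‖ * ‖algebraMap ℝ A ‖x‖ - x‖ := φ.le_opNorm _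
      _ ≤ 1 * ‖x‖ := by
          rw [hnorm, one_mul, one_mul]
          exact norm_algebraMap_norm_sub_le x hx hsp
      _ = ‖x‖ := one_mul _
  have hre : 0 ≤ (φ x).re := by
    have heq : (‖x‖ : ℂ) - φ x = ((‖x‖ - (φ x).re : ℝ) : ℂ) := by
      apply Complex.ext <;> simp [him]
    rw [heq, Complex.norm_real, Real.norm_eq_abs, abs_le] at hkey
    linarith [hkey.1]
  rw [Complex.le_def]
  exact ⟨by simpa using hre, by simp [him]⟩

lemma exists_isState [Nontrivial A] : ∃ φ : A →L[ℂ] ℂ, IsState A φ := by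
  obtain ⟨g, hg1, hg2⟩ := exists_dual_vector ℂ (1 : A) (by simp)
  refine ⟨g, isState_of_unital g ?_ hg1.le⟩
  rw [hg2, norm_one]
  simp

/-- pure complex computation -/
lemma abs_add_mul_sq (z w : ℂ) (t : ℝ) :
    ‖z + (t : ℂ) * w‖ ^ 2
      = ‖z‖ ^ 2 + 2 * t * ((starRingEnd ℂ) z * w).re
        + t ^ 2 * ‖w‖ ^ 2 := by
  rw [Complex.sq_norm, Complex.sq_norm, Complex.sq_norm]
  simp only [Complex.normSq_apply, Complex.add_re, Complex.add_im, Complex.mul_re,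
    Complex.mul_im, Complex.ofReal_re, Complex.ofReal_im, Complex.conj_re, Complex.conj_im]
  ring

lemma abs_lb (z w : ℂ) : ‖z‖ - ‖w‖ ≤ ‖z + w‖ := by
  simpa [sub_neg_eq_add] using norm_sub_norm_le z (-w)

def stateSet (A : Type*) [CStarAlgebra A] : Set (WeakDual ℂ A) :=
  {φ | IsState A (WeakDual.toStrongDual φ)}

lemma stateSet_abs_le (x : A) {φ : WeakDual ℂ A} (hφ : φ ∈ stateSet A) :
    ‖φ x‖ ≤ ‖x‖ := by
  have h := (WeakDual.toStrongDual φ).le_opNorm x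
  rw [hφ.2.2, one_mul] at h
  exact h

lemma isCompact_stateSet [Nontrivial A] : IsCompact (stateSet A) := by
  have heq : stateSet A
      = (({φ : WeakDual ℂ A | ∀ c : A, 0 ≤ φ (star c * c)} ∩ {φ | φ 1 = 1})
        ∩ WeakDual.toStrongDual ⁻¹' Metric.closedBall 0 1) := by
    ext φ
    constructor
    · rintro ⟨hpos, h1, hn⟩
      exact ⟨⟨hpos, h1⟩, by simpa [Metric.mem_closedBall, dist_zero_right] using hn.le⟩
    · rintro ⟨⟨_, h1⟩, hball⟩
      have hn : ‖WeakDual.toStrongDual φ‖ ≤ 1 := by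
        simpa [Metric.mem_closedBall, dist_zero_right] using hball
      exact isState_of_unital _ h1 hn
  rw [heq]
  refine IsCompact.inter_left (WeakDual.isCompact_closedBall (𝕜 := ℂ) 0 1) ?_
  refine IsClosed.inter ?_ ?_
  · have : {φ : WeakDual ℂ A | ∀ c : A, 0 ≤ φ (star c * c)}
        = ⋂ c : A, (fun φ : WeakDual ℂ A => φ (star c * c)) ⁻¹' {z : ℂ | 0 ≤ z} := by
      ext φ; simp
    rw [this]
    refine isClosed_iInter fun c => IsClosed.preimage (WeakDual.eval_continuous _) ?_
    have : {z : ℂ | 0 ≤ z} = Complex.re ⁻¹' Set.Ici 0 ∩ Complex.im ⁻¹' {0} := by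
      ext z
      rw [Set.mem_setOf_eq, Complex.le_def]
      simp [eq_comm]
    rw [this]
    exact (isClosed_Ici.preimage Complex.continuous_re).inter
      (isClosed_singleton.preimage Complex.continuous_im)
  · exact isClosed_eq (WeakDual.eval_continuous 1) continuous_const

lemma nr_set_eq (x : A) :
    {r : ℝ | ∃ φ : A →L[ℂ] ℂ, IsState A φ ∧ r = ‖φ x‖}
      = (fun φ : WeakDual ℂ A => ‖φ x‖) '' stateSet A := by
  ext r
  constructor
  · rintro ⟨φ, hφ, rfl⟩
    exact ⟨StrongDual.toWeakDual φ, hφ, rfl⟩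
  · rintro ⟨φ, hφ, rfl⟩
    exact ⟨WeakDual.toStrongDual φ, hφ, rfl⟩

lemma nr_attained [Nontrivial A] (x : A) :
    (∃ φ ∈ stateSet A, ‖φ x‖ = nr x)
      ∧ ∀ ψ ∈ stateSet A, ‖ψ x‖ ≤ nr x := by
  have hcont : Continuous fun φ : WeakDual ℂ A => ‖φ x‖ :=
    continuous_norm.comp (WeakDual.eval_continuous x)
  have hcomp : IsCompact ((fun φ : WeakDual ℂ A => ‖φ x‖) '' stateSet A) :=
    isCompact_stateSet.image hcont
  have hne : ((fun φ : WeakDual ℂ A => ‖φ x‖) '' stateSet A).Nonempty := by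
    obtain ⟨φ, hφ⟩ := exists_isState (A := A)
    exact ⟨_, ⟨StrongDual.toWeakDual φ, hφ, rfl⟩⟩
  have hnr : nr x = sSup ((fun φ : WeakDual ℂ A => ‖φ x‖) '' stateSet A) := by
    rw [nr, nr_set_eq]
  constructor
  · have := hcomp.sSup_mem hne
    rw [← hnr] at this
    obtain ⟨φ, hφ, hval⟩ := this
    exact ⟨φ, hφ, hval⟩
  · intro ψ hψ
    rw [hnr]
    exact le_csSup hcomp.bddAbove ⟨ψ, hψ, rfl⟩


theorem stmt11 (a b : A) (ha : a ≠ 0) (hb : b ≠ 0) :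
    ∃ φ : A →L[ℂ] ℂ, IsState A φ ∧ ‖φ a‖ = nr a ∧
      (∀ ψ : A →L[ℂ] ℂ, IsState A ψ → ‖ψ a‖ = nr a →
        ((starRingEnd ℂ) (ψ a) * ψ b).re ≤ ((starRingEnd ℂ) (φ a) * φ b).re) ∧
      Filter.Tendsto (fun t : ℝ => (nr (a + (t : ℂ) • b) ^ 2 - nr a ^ 2) / (2 * t))
        (nhdsWithin 0 (Set.Ioi 0)) (nhds (((starRingEnd ℂ) (φ a) * φ b).re)) := by
  haveI : Nontrivial A := nontrivial_of_ne a 0 ha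
  set g : WeakDual ℂ A → ℝ := fun φ => ((starRingEnd ℂ) (φ a) * φ b).re with hgdef
  have hgcont : Continuous g := by
    refine Complex.continuous_re.comp (Continuous.mul ?_ (WeakDual.eval_continuous b))
    exact Complex.continuous_conj.comp (WeakDual.eval_continuous a)
  -- the maximizing set M
  set M : Set (WeakDual ℂ A) := stateSet A ∩ {φ | ‖φ a‖ = nr a} with hMdef
  have hMcomp : IsCompact M :=
    isCompact_stateSet.inter_right
      (isClosed_eq (continuous_norm.comp (WeakDual.eval_continuous a)) continuous_const)
  have hMne : M.Nonempty := by
    obtain ⟨⟨φ, hφ, hval⟩, _⟩ := nr_attained (A := A) a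
    exact ⟨φ, hφ, hval⟩
  obtain ⟨φ₀, hφ₀M, hφ₀max'⟩ := hMcomp.exists_isMaxOn hMne hgcont.continuousOn
  have hφ₀max : ∀ ψ ∈ M, g ψ ≤ g φ₀ := fun ψ hψ => hφ₀max' hψ
  have hφ₀S : φ₀ ∈ stateSet A := hφ₀M.1
  have hφ₀a : ‖φ₀ a‖ = nr a := hφ₀M.2
  set c : ℝ := g φ₀ with hcdef
  have hnra_nonneg : 0 ≤ nr a := hφ₀a ▸ norm_nonneg _
  refine ⟨WeakDual.toStrongDual φ₀, hφ₀S, hφ₀a, ?_, ?_⟩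
  · intro ψ hψ hψa
    exact hφ₀max (StrongDual.toWeakDual ψ) ⟨hψ, hψa⟩
  -- the derivative limit
  rw [Metric.tendsto_nhdsWithin_nhds]
  intro ε hε
  -- key uniform bound
  have key : ∃ θ > 0, ∀ φ ∈ stateSet A, nr a - θ < ‖φ a‖ → g φ < c + ε / 2 := by
    set K : Set (WeakDual ℂ A) := stateSet A ∩ {φ | c + ε / 2 ≤ g φ} with hKdef
    have hKcomp : IsCompact K :=
      isCompact_stateSet.inter_right (isClosed_le continuous_const hgcont)
    rcases K.eq_empty_or_nonempty with hK | hK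
    · refine ⟨1, one_pos, fun φ hφ _ => ?_⟩
      by_contra h
      push_neg at h
      have : φ ∈ K := ⟨hφ, h⟩
      rw [hK] at this
      exact this
    · obtain ⟨ψ₁, hψ₁K, hψ₁max'⟩ := hKcomp.exists_isMaxOn hK
        ((continuous_norm.comp (WeakDual.eval_continuous a)).continuousOn)
      have hψ₁max : ∀ φ ∈ K, ‖φ a‖ ≤ ‖ψ₁ a‖ := fun φ hφ => hψ₁max' hφ
      have hψ₁le : ‖ψ₁ a‖ ≤ nr a := (nr_attained a).2 ψ₁ hψ₁K.1
      have hm : ‖ψ₁ a‖ < nr a := by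
        rcases lt_or_eq_of_le hψ₁le with h | h
        · exact h
        · exfalso
          have h1 : g ψ₁ ≤ c := hφ₀max ψ₁ ⟨hψ₁K.1, h⟩
          have h2 : c + ε / 2 ≤ g ψ₁ := hψ₁K.2
          linarith
      refine ⟨nr a - ‖ψ₁ a‖, by linarith, fun φ hφ hgt => ?_⟩
      by_contra h
      push_neg at h
      have hin : φ ∈ K := ⟨hφ, h⟩
      have := hψ₁max φ hin
      have hgt' : ‖ψ₁ a‖ < ‖φ a‖ := by linarith
      linarith
  obtain ⟨θ, hθ, hkey⟩ := key
  refine ⟨min (θ / (2 * ‖b‖ + 1)) (ε / (‖b‖ ^ 2 + 1)), by positivity, ?_⟩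
  intro t htIoi hdist
  have ht : 0 < t := htIoi
  rw [Real.dist_eq, sub_zero, abs_of_pos ht] at hdist
  have ht1 : t < θ / (2 * ‖b‖ + 1) := lt_of_lt_of_le hdist (min_le_left _ _)
  have ht2 : t < ε / (‖b‖ ^ 2 + 1) := lt_of_lt_of_le hdist (min_le_right _ _)
  have hbpos : (0:ℝ) < 2 * ‖b‖ + 1 := by positivity
  have ht1' : t * (2 * ‖b‖ + 1) < θ := by
    rw [div_eq_mul_inv] at ht1
    calc t * (2 * ‖b‖ + 1) < θ * (2 * ‖b‖ + 1)⁻¹ * (2 * ‖b‖ + 1) := by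
          exact mul_lt_mul_of_pos_right ht1 hbpos
      _ = θ := by field_simp
  have ht2' : t * (‖b‖ ^ 2 + 1) < ε := by
    have h2 : (0:ℝ) < ‖b‖ ^ 2 + 1 := by positivity
    rw [div_eq_mul_inv] at ht2
    calc t * (‖b‖ ^ 2 + 1) < ε * (‖b‖ ^ 2 + 1)⁻¹ * (‖b‖ ^ 2 + 1) := by
          exact mul_lt_mul_of_pos_right ht2 h2
      _ = ε := by field_simp
  -- expansion for states
  have hexp : ∀ φ ∈ stateSet A, ‖φ (a + (t : ℂ) • b)‖ ^ 2
      = ‖φ a‖ ^ 2 + 2 * t * g φ + t ^ 2 * ‖φ b‖ ^ 2 := by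
    intro φ _
    have : φ (a + (t : ℂ) • b) = φ a + (t : ℂ) * φ b := by
      rw [map_add, map_smul, smul_eq_mul]
    rw [this, abs_add_mul_sq]
  -- pick maximizer for a + t b
  obtain ⟨⟨φt, hφtS, hφtval⟩, hub⟩ := nr_attained (A := A) (a + (t : ℂ) • b)
  -- lower bound for nr (a + t b)
  have hφ₀low : nr a - t * ‖b‖ ≤ ‖φ₀ (a + (t : ℂ) • b)‖ := by
    have he : φ₀ (a + (t : ℂ) • b) = φ₀ a + (t : ℂ) * φ₀ b := by
      rw [map_add, map_smul, smul_eq_mul]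
    rw [he]
    have h1 : ‖φ₀ a‖ - ‖(t : ℂ) * φ₀ b‖
        ≤ ‖φ₀ a + (t : ℂ) * φ₀ b‖ := abs_lb _ _
    have h2 : ‖(t : ℂ) * φ₀ b‖ ≤ t * ‖b‖ := by
      rw [norm_mul, Complex.norm_of_nonneg ht.le]
      exact mul_le_mul_of_nonneg_left (stateSet_abs_le b hφ₀S) ht.le
    linarith [hφ₀a ▸ h1]
  have hlow : nr a - t * ‖b‖ ≤ nr (a + (t : ℂ) • b) :=
    le_trans hφ₀low (hub φ₀ hφ₀S)
  -- φt is nearly maximizing for a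
  have hφta : nr a - θ < ‖φt a‖ := by
    have he : φt (a + (t : ℂ) • b) = φt a + (t : ℂ) * φt b := by
      rw [map_add, map_smul, smul_eq_mul]
    have h1 : ‖φt (a + (t : ℂ) • b)‖ - ‖(t : ℂ) * φt b‖
        ≤ ‖φt a‖ := by
      have := abs_lb (φt a + (t : ℂ) * φt b) (-((t : ℂ) * φt b))
      simp only [add_neg_cancel_right, map_neg] at this
      rw [he]
      simpa using this
    have h2 : ‖(t : ℂ) * φt b‖ ≤ t * ‖b‖ := by
      rw [norm_mul, Complex.norm_of_nonneg ht.le]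
      exact mul_le_mul_of_nonneg_left (stateSet_abs_le b hφtS) ht.le
    have h3 : 2 * t * ‖b‖ < θ := by nlinarith [norm_nonneg b]
    have h4 := hφtval
    nlinarith [hlow]
  have hgφt : g φt < c + ε / 2 := hkey φt hφtS hφta
  -- upper estimate
  have hφta_le : ‖φt a‖ ≤ nr a := (nr_attained a).2 φt hφtS
  have hupper : nr (a + (t : ℂ) • b) ^ 2 - nr a ^ 2
      ≤ 2 * t * g φt + t ^ 2 * ‖b‖ ^ 2 := by
    have h1 := hexp φt hφtS
    have h2 : ‖φt b‖ ^ 2 ≤ ‖b‖ ^ 2 := by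
      have := stateSet_abs_le b hφtS
      nlinarith [norm_nonneg (φt b)]
    have h3 : ‖φt a‖ ^ 2 ≤ nr a ^ 2 := by
      nlinarith [norm_nonneg (φt a)]
    nlinarith [hφtval]
  -- lower estimate
  have hlower : nr a ^ 2 + 2 * t * c ≤ nr (a + (t : ℂ) • b) ^ 2 := by
    have h1 := hexp φ₀ hφ₀S
    have h2 : ‖φ₀ (a + (t : ℂ) • b)‖ ≤ nr (a + (t : ℂ) • b) := hub φ₀ hφ₀S
    have h4 : 0 ≤ ‖φ₀ (a + (t : ℂ) • b)‖ := norm_nonneg _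
    nlinarith [sq_nonneg (t * ‖φ₀ b‖), hφ₀a]
  -- conclude
  have hQlow : c ≤ (nr (a + (t : ℂ) • b) ^ 2 - nr a ^ 2) / (2 * t) := by
    rw [le_div_iff₀ (by positivity : (0:ℝ) < 2 * t)]
    linarith
  have hQhigh : (nr (a + (t : ℂ) • b) ^ 2 - nr a ^ 2) / (2 * t) < c + ε := by
    rw [div_lt_iff₀ (by positivity : (0:ℝ) < 2 * t)]
    have hb2 : t ^ 2 * ‖b‖ ^ 2 ≤ t * (t * (‖b‖ ^ 2 + 1)) := by nlinarith
    nlinarith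
  have hceq : ((starRingEnd ℂ) ((WeakDual.toStrongDual φ₀) a)
      * (WeakDual.toStrongDual φ₀) b).re = c := rfl
  rw [Real.dist_eq, abs_lt, hceq]
  constructor <;> [linarith; linarith]
end

section
/- Let a, b be elements of a unital C*-algebra A. Then a ⊥_B^v b if and only if v(a + λb)² ≥ v(a)² + |λ|²·C(b)² for all λ ∈ ℂ, where C(b) = inf over states φ of |φ(b)|. -/
set_option maxHeartbeats 1000000

open scoped ComplexOrder

variable {A : Type*} [CStarAlgebra A]

namespace Stmt15Aux

/-- expansion of `|z+w|²`. -/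
lemma abs_add_sq (z w : ℂ) :
    ‖z + w‖ ^ 2
      = ‖z‖ ^ 2 + 2 * ((starRingEnd ℂ) z * w).re + ‖w‖ ^ 2 := by
  rw [Complex.sq_norm, Complex.sq_norm, Complex.sq_norm]
  simp only [Complex.normSq_apply, Complex.add_re, Complex.add_im, Complex.mul_re,
    Complex.conj_re, Complex.conj_im]
  ring

lemma state_abs_le {φ : A →L[ℂ] ℂ} (h : IsState A φ) (c : A) : ‖φ c‖ ≤ ‖c‖ := by
  have h2 := φ.le_opNorm c
  rw [h.2.2, one_mul] at h2
  simpa using h2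

lemma nrSet_bddAbove (c : A) :
    BddAbove {r : ℝ | ∃ φ : A →L[ℂ] ℂ, IsState A φ ∧ r = ‖φ c‖} := by
  refine ⟨‖c‖, ?_⟩
  rintro r ⟨φ, hφ, rfl⟩
  exact state_abs_le hφ c

lemma nrSet_bddBelow (c : A) :
    BddBelow {r : ℝ | ∃ φ : A →L[ℂ] ℂ, IsState A φ ∧ r = ‖φ c‖} := by
  refine ⟨0, ?_⟩
  rintro r ⟨φ, hφ, rfl⟩
  exact norm_nonneg _

lemma nr_nonneg (c : A) : 0 ≤ nr c :=
  Real.sSup_nonneg (by rintro r ⟨φ, hφ, rfl⟩; exact norm_nonneg _)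

lemma crawford_nonneg (c : A) : 0 ≤ crawford c :=
  Real.sInf_nonneg (by rintro r ⟨φ, hφ, rfl⟩; exact norm_nonneg _)

lemma abs_le_nr {φ : A →L[ℂ] ℂ} (hφ : IsState A φ) (c : A) : ‖φ c‖ ≤ nr c :=
  le_csSup (nrSet_bddAbove c) ⟨φ, hφ, rfl⟩

lemma crawford_le_abs {φ : A →L[ℂ] ℂ} (hφ : IsState A φ) (c : A) :
    crawford c ≤ ‖φ c‖ :=
  csInf_le (nrSet_bddBelow c) ⟨φ, hφ, rfl⟩

end Stmt15Aux

open Stmt15Aux in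
theorem stmt15 (a b : A) :
    nrOrth a b ↔
      ∀ lam : ℂ, nr a ^ 2 + ‖lam‖ ^ 2 * crawford b ^ 2 ≤ nr (a + lam • b) ^ 2 := by
  constructor
  · intro hOrth lam
    by_cases hex : ∃ ψ : A →L[ℂ] ℂ, IsState A ψ
    swap
    · -- no states: everything is trivial
      have hempty : ∀ c : A,
          {r : ℝ | ∃ φ : A →L[ℂ] ℂ, IsState A φ ∧ r = ‖φ c‖} = ∅ := by
        intro c
        apply Set.eq_empty_iff_forall_notMem.mpr
        rintro r ⟨φ, hφ, -⟩
        exact hex ⟨φ, hφ⟩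
      have h1 : nr a = 0 := by unfold nr; rw [hempty a, Real.sSup_empty]
      have h2 : crawford b = 0 := by unfold crawford; rw [hempty b, Real.sInf_empty]
      rw [h1, h2]
      have := sq_nonneg (nr (a + lam • b))
      nlinarith [sq_nonneg (‖lam‖)]
    obtain ⟨ψ₀, hψ₀⟩ := hex
    haveI : Nontrivial A := by
      refine ⟨⟨1, 0, fun h10 => ?_⟩⟩
      have h := hψ₀.2.1
      rw [h10, map_zero] at h
      exact one_ne_zero h.symm
    -- the state space, inside the weak-star dual
    set S : Set (WeakDual ℂ A) := {φ : WeakDual ℂ A | IsState A φ} with hSdef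
    have hSne : S.Nonempty := ⟨ψ₀, hψ₀⟩
    have hconepos : IsClosed {z : ℂ | 0 ≤ z} := by
      have h : {z : ℂ | 0 ≤ z} = Complex.re ⁻¹' Set.Ici 0 ∩ Complex.im ⁻¹' {0} := by
        ext z; simp [Complex.le_def, eq_comm]
      rw [h]
      exact (isClosed_Ici.preimage Complex.continuous_re).inter
        (isClosed_singleton.preimage Complex.continuous_im)
    have hSc : IsCompact S := by
      have hP : IsCompact (WeakDual.toStrongDual ⁻¹' Metric.closedBall (0 : StrongDual ℂ A) 1) :=
        WeakDual.isCompact_closedBall 0 1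
      have hQ1 : IsClosed {φ : WeakDual ℂ A | ∀ x : A, 0 ≤ φ (star x * x)} := by
        have h : {φ : WeakDual ℂ A | ∀ x : A, 0 ≤ φ (star x * x)}
            = ⋂ x : A, (fun φ : WeakDual ℂ A => φ (star x * x)) ⁻¹' {z : ℂ | 0 ≤ z} := by
          ext φ; simp
        rw [h]
        exact isClosed_iInter fun x => hconepos.preimage (WeakDual.eval_continuous _)
      have hQ2 : IsClosed {φ : WeakDual ℂ A | φ 1 = 1} :=
        isClosed_eq (WeakDual.eval_continuous 1) continuous_const
      have hSeq : S = (WeakDual.toStrongDual ⁻¹' Metric.closedBall (0 : StrongDual ℂ A) 1)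
          ∩ ({φ : WeakDual ℂ A | ∀ x : A, 0 ≤ φ (star x * x)} ∩ {φ : WeakDual ℂ A | φ 1 = 1}) := by
        ext φ
        constructor
        · rintro ⟨hpos, hone, hnorm⟩
          refine ⟨?_, hpos, hone⟩
          show WeakDual.toStrongDual φ ∈ Metric.closedBall 0 1
          rw [Metric.mem_closedBall, dist_zero_right]
          exact le_of_eq hnorm
        · rintro ⟨hball, hpos, hone⟩
          refine ⟨hpos, hone, ?_⟩
          have hle : ‖WeakDual.toStrongDual φ‖ ≤ 1 := by
            have := hball
            rwa [Set.mem_preimage, Metric.mem_closedBall, dist_zero_right] at this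
          refine le_antisymm hle ?_
          have h2 := (WeakDual.toStrongDual φ).le_opNorm (1 : A)
          have hone' : (WeakDual.toStrongDual φ) (1 : A) = 1 := hone
          rw [hone', norm_one, norm_one, mul_one] at h2
          exact h2
      rw [hSeq]
      exact hP.inter_right (hQ1.inter hQ2)
    have hSclosed : IsClosed S := hSc.isClosed
    have heval : ∀ c : A, Continuous fun φ : WeakDual ℂ A => ‖φ c‖ := fun c =>
      continuous_norm.comp (WeakDual.eval_continuous c)
    -- nr as a sup over S, attained
    have hnr_eq : ∀ c : A,
        nr c = sSup ((fun φ : WeakDual ℂ A => ‖φ c‖) '' S) := by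
      intro c
      unfold nr
      congr 1
      ext r
      constructor
      · rintro ⟨φ, hφ, rfl⟩
        exact ⟨φ, hφ, rfl⟩
      · rintro ⟨φ, hφ, rfl⟩
        exact ⟨φ, hφ, rfl⟩
    have hnr_mem : ∀ c : A, ∃ φ ∈ S, ‖φ c‖ = nr c := by
      intro c
      have h1 := (hSc.image (heval c)).sSup_mem (hSne.image _)
      rw [← hnr_eq c] at h1
      obtain ⟨φ, hφS, hφ⟩ := h1
      exact ⟨φ, hφS, hφ⟩
    -- the key existence of a "good" state
    obtain ⟨φ, hφS, hφa, hφre⟩ :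
        ∃ φ ∈ S, ‖φ a‖ = nr a
          ∧ 0 ≤ ((starRingEnd ℂ) (φ a) * (lam * φ b)).re := by
      by_contra hcon
      push_neg at hcon
      set g : WeakDual ℂ A → ℝ :=
        fun φ => ((starRingEnd ℂ) (φ a) * (lam * φ b)).re with hgdef
      have hgcont : Continuous g := by
        apply Complex.continuous_re.comp
        exact ((Complex.continuous_conj.comp (WeakDual.eval_continuous a)).mul
          (continuous_const.mul (WeakDual.eval_continuous b)))
      set C : ℕ → Set (WeakDual ℂ A) := fun n =>
        S ∩ {φ : WeakDual ℂ A | nr a - 1 / ((n : ℝ) + 1) ≤ ‖φ a‖ ∧ 0 ≤ g φ}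
        with hCdef
      have hCc : ∀ n, IsClosed (C n) := by
        intro n
        apply hSclosed.inter
        have h : {φ : WeakDual ℂ A | nr a - 1 / ((n : ℝ) + 1) ≤ ‖φ a‖ ∧ 0 ≤ g φ}
            = {φ : WeakDual ℂ A | nr a - 1 / ((n : ℝ) + 1) ≤ ‖φ a‖}
              ∩ {φ : WeakDual ℂ A | 0 ≤ g φ} := rfl
        rw [h]
        exact (isClosed_le continuous_const (heval a)).inter
          (isClosed_le continuous_const hgcont)
      have hCd : ∀ n, C (n + 1) ⊆ C n := by
        intro n φ hφ
        obtain ⟨h1, h2, h3⟩ := hφ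
        refine ⟨h1, le_trans ?_ h2, h3⟩
        have : 1 / (((n : ℝ) + 1) + 1) ≤ 1 / ((n : ℝ) + 1) := by
          apply one_div_le_one_div_of_le <;> [positivity; linarith]
        push_cast
        linarith
      by_cases hall : ∀ n, (C n).Nonempty
      · obtain ⟨φi, hφi⟩ := IsCompact.nonempty_iInter_of_sequence_nonempty_isCompact_isClosed
          C hCd hall (hSc.of_isClosed_subset (hCc 0) Set.inter_subset_left) hCc
        simp only [Set.mem_iInter] at hφi
        have hφiS : φi ∈ S := (hφi 0).1
        have h1 : ‖φi a‖ = nr a := by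
          refine le_antisymm (abs_le_nr hφiS a) ?_
          by_contra h
          push_neg at h
          obtain ⟨n, hn⟩ := exists_nat_one_div_lt (show (0 : ℝ) < nr a - ‖φi a‖ by
            linarith)
          have := (hφi n).2.1
          linarith
        exact absurd ((hφi 0).2.2) (not_le.mpr (hcon φi hφiS h1))
      · push_neg at hall
        obtain ⟨N, hN⟩ := hall
        set ε : ℝ := 1 / ((N : ℝ) + 1) with hεdef
        have hε : 0 < ε := by positivity
        set K : Set (WeakDual ℂ A) :=
          S ∩ {φ : WeakDual ℂ A | nr a - ε ≤ ‖φ a‖} with hKdef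
        have hKg : ∀ φ ∈ K, g φ < 0 := by
          rintro φ ⟨hφS, hφge⟩
          by_contra h
          push_neg at h
          exact Set.eq_empty_iff_forall_notMem.mp hN φ ⟨hφS, hφge, h⟩
        have hKc : IsCompact K :=
          hSc.inter_right (isClosed_le continuous_const (heval a))
        have hKne : K.Nonempty := by
          obtain ⟨φm, hφmS, hφmeq⟩ := hnr_mem a
          refine ⟨φm, hφmS, ?_⟩
          show nr a - ε ≤ ‖φm a‖
          rw [hφmeq]; linarith
        obtain ⟨ψ, hψK, hψmax⟩ := hKc.exists_isMaxOn hKne hgcont.continuousOn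
        set δ : ℝ := -g ψ with hδdef
        have hδ : 0 < δ := by have := hKg ψ hψK; linarith
        have hKle : ∀ φ ∈ K, g φ ≤ -δ := by
          intro φ hφ
          have := (isMaxOn_iff.mp hψmax) φ hφ
          linarith
        set M : ℝ := ‖lam‖ * ‖b‖ + 1 with hMdef
        have hM : 0 < M := by positivity
        have hMb : ∀ φ ∈ S, ‖lam * φ b‖ ≤ M := by
          intro φ hφ
          rw [norm_mul]
          have h1 := state_abs_le (show IsState A φ from hφ) b
          have h2 : ‖lam‖ * ‖φ b‖ ≤ ‖lam‖ * ‖b‖ :=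
            mul_le_mul_of_nonneg_left h1 (norm_nonneg _)
          linarith
        set t : ℝ := min (δ / M ^ 2) (ε / (2 * M)) with htdef
        have ht : 0 < t := lt_min (by positivity) (by positivity)
        have hM0 : M ≠ 0 := ne_of_gt hM
        have htM2 : t * M ^ 2 ≤ δ := by
          have h1 : t ≤ δ / M ^ 2 := min_le_left _ _
          calc t * M ^ 2 ≤ δ / M ^ 2 * M ^ 2 := mul_le_mul_of_nonneg_right h1 (by positivity)
            _ = δ := by field_simp
        have htM : t * M ≤ ε / 2 := by
          have h1 : t ≤ ε / (2 * M) := min_le_right _ _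
          calc t * M ≤ ε / (2 * M) * M := mul_le_mul_of_nonneg_right h1 hM.le
            _ = ε / 2 := by field_simp
        set c : A := a + ((t : ℂ) * lam) • b with hcdef
        have hφc : ∀ φ : WeakDual ℂ A, (φ c : ℂ) = φ a + (t : ℂ) * (lam * φ b) := by
          intro φ
          rw [hcdef]
          simp [map_add, map_smul, smul_eq_mul]
          ring
        obtain ⟨ψc, hψcS, hψceq⟩ := hnr_mem c
        have horth : nr a ≤ nr c := hOrth ((t : ℂ) * lam)
        by_cases hψcK : ψc ∈ K
        · -- near the maximizing set: use the negative derivative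
          have hexp : ‖ψc c‖ ^ 2
              = ‖ψc a‖ ^ 2 + 2 * t * g ψc
                + t ^ 2 * ‖lam * ψc b‖ ^ 2 := by
            rw [hφc ψc, abs_add_sq]
            have hre : ((starRingEnd ℂ) (ψc a) * ((t : ℂ) * (lam * ψc b))).re
                = t * g ψc := by
              rw [show (starRingEnd ℂ) (ψc a) * ((t : ℂ) * (lam * ψc b))
                  = (t : ℂ) * ((starRingEnd ℂ) (ψc a) * (lam * ψc b)) by ring]
              simp [Complex.mul_re, hgdef]
            have habs2 : ‖(t : ℂ) * (lam * ψc b)‖ ^ 2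
                = t ^ 2 * ‖lam * ψc b‖ ^ 2 := by
              rw [norm_mul, Complex.norm_of_nonneg ht.le]
              ring
            rw [hre, habs2]
            ring
          have e1 : ‖ψc a‖ ^ 2 ≤ nr a ^ 2 :=
            pow_le_pow_left₀ (norm_nonneg _) (abs_le_nr (show IsState A ψc from hψcS) a) 2
          have e2 : g ψc ≤ -δ := hKle ψc hψcK
          have e3 : ‖lam * ψc b‖ ^ 2 ≤ M ^ 2 :=
            pow_le_pow_left₀ (norm_nonneg _) (hMb ψc hψcS) 2
          have hlt1 : nr c ^ 2 ≤ nr a ^ 2 - t * δ := by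
            rw [← hψceq, hexp]
            nlinarith [sq_nonneg t, ht.le]
          have h2 : nr a ^ 2 ≤ nr c ^ 2 := pow_le_pow_left₀ (nr_nonneg a) horth 2
          nlinarith [mul_pos ht hδ]
        · -- far from the maximizing set
          have hψclt : ‖ψc a‖ < nr a - ε := by
            by_contra h
            push_neg at h
            exact hψcK ⟨hψcS, h⟩
          have htri : ‖ψc c‖
              ≤ ‖ψc a‖ + ‖(t : ℂ) * (lam * ψc b)‖ := by
            rw [hφc ψc]
            exact norm_add_le _ _
          have habs' : ‖(t : ℂ) * (lam * ψc b)‖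
              = t * ‖lam * ψc b‖ := by
            rw [norm_mul, Complex.norm_of_nonneg ht.le]
          have h3 : t * ‖lam * ψc b‖ ≤ t * M :=
            mul_le_mul_of_nonneg_left (hMb ψc hψcS) ht.le
          have h4 : nr c ≤ nr a - ε / 2 := by
            rw [← hψceq]
            rw [habs'] at htri
            calc ‖ψc c‖
                ≤ ‖ψc a‖ + t * ‖lam * ψc b‖ := htri
              _ ≤ (nr a - ε) + ε / 2 := add_le_add hψclt.le (h3.trans htM)
              _ = nr a - ε / 2 := by ring
          linarith
    -- conclude from the good state
    have h1 : ‖φ (a + lam • b)‖ ≤ nr (a + lam • b) :=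
      abs_le_nr (show IsState A φ from hφS) _
    have h2 : (φ (a + lam • b) : ℂ) = φ a + lam * φ b := by
      simp [map_add, map_smul, smul_eq_mul]
    have h4 : crawford b ≤ ‖φ b‖ := crawford_le_abs (show IsState A φ from hφS) b
    have h5 : crawford b ^ 2 ≤ ‖φ b‖ ^ 2 :=
      pow_le_pow_left₀ (crawford_nonneg b) h4 2
    have h6 : ‖lam * φ b‖ ^ 2
        = ‖lam‖ ^ 2 * ‖φ b‖ ^ 2 := by
      rw [norm_mul]; ring
    have hfinal : nr a ^ 2 + ‖lam‖ ^ 2 * crawford b ^ 2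
        ≤ ‖φ (a + lam • b)‖ ^ 2 := by
      rw [h2, abs_add_sq, ← hφa]
      have h7 : ‖lam‖ ^ 2 * crawford b ^ 2 ≤ ‖lam * φ b‖ ^ 2 := by
        rw [h6]
        exact mul_le_mul_of_nonneg_left h5 (by positivity)
      linarith [hφre]
    exact hfinal.trans (pow_le_pow_left₀ (norm_nonneg _) h1 2)
  · intro h lam
    have h2 := h lam
    have h3 : nr a ^ 2 ≤ nr (a + lam • b) ^ 2 := by
      have : (0 : ℝ) ≤ ‖lam‖ ^ 2 * crawford b ^ 2 := by positivity
      linarith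
    exact le_of_pow_le_pow_left₀ two_ne_zero (nr_nonneg _) h3
end

section
/- Let a, b be elements of a unital C*-algebra A with C(b) > 0. Then there exists a unique ζ ∈ ℂ such that v((a + ζb) + λb)² ≥ v(a + ζb)² + |λ|²·C(b)² for all λ ∈ ℂ. -/
open scoped ComplexOrder

namespace Stmt16Aux

variable {A : Type*} [CStarAlgebra A]

lemma bddAbove_S (x : A) :
    BddAbove {r : ℝ | ∃ φ : A →L[ℂ] ℂ, IsState A φ ∧ r = ‖φ x‖} := by
  refine ⟨‖x‖, ?_⟩
  rintro r ⟨φ, hφ, rfl⟩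
  calc ‖φ x‖ = ‖φ x‖ := rfl
    _ ≤ ‖φ‖ * ‖x‖ := φ.le_opNorm x
    _ = ‖x‖ := by rw [hφ.2.2, one_mul]

lemma abs_le_nr {φ : A →L[ℂ] ℂ} (hφ : IsState A φ) (x : A) :
    ‖φ x‖ ≤ nr x :=
  le_csSup (bddAbove_S x) ⟨φ, hφ, rfl⟩

lemma nr_nonneg {φ : A →L[ℂ] ℂ} (hφ : IsState A φ) (x : A) : 0 ≤ nr x :=
  le_trans (norm_nonneg _) (abs_le_nr hφ x)

lemma crawford_le {φ : A →L[ℂ] ℂ} (hφ : IsState A φ) (b : A) :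
    crawford b ≤ ‖φ b‖ :=
  csInf_le ⟨0, by rintro r ⟨ψ, hψ, rfl⟩; positivity⟩ ⟨φ, hφ, rfl⟩

lemma nr_le (hex : ∃ φ : A →L[ℂ] ℂ, IsState A φ) {x : A} {M : ℝ}
    (h : ∀ φ : A →L[ℂ] ℂ, IsState A φ → ‖φ x‖ ≤ M) : nr x ≤ M := by
  obtain ⟨φ₀, h₀⟩ := hex
  exact csSup_le ⟨_, φ₀, h₀, rfl⟩ (by rintro r ⟨φ, hφ, rfl⟩; exact h φ hφ)

lemma nr_le_norm (hex : ∃ φ : A →L[ℂ] ℂ, IsState A φ) (x : A) : nr x ≤ ‖x‖ := by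
  refine nr_le hex fun φ hφ => ?_
  calc ‖φ x‖ = ‖φ x‖ := rfl
    _ ≤ ‖φ‖ * ‖x‖ := φ.le_opNorm x
    _ = ‖x‖ := by rw [hφ.2.2, one_mul]

lemma nr_add_le (hex : ∃ φ : A →L[ℂ] ℂ, IsState A φ) (x y : A) :
    nr (x + y) ≤ nr x + nr y := by
  refine nr_le hex fun φ hφ => ?_
  rw [map_add]
  exact le_trans (norm_add_le _ _) (add_le_add (abs_le_nr hφ x) (abs_le_nr hφ y))

/-- parallelogram identity in ℂ -/
lemma para (z w l : ℂ) :
    ‖z + l * w‖ ^ 2 + ‖z - l * w‖ ^ 2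
      = 2 * ‖z‖ ^ 2 + 2 * ‖l‖ ^ 2 * ‖w‖ ^ 2 := by
  simp only [Complex.sq_norm, Complex.normSq_apply, Complex.add_re, Complex.add_im,
    Complex.sub_re, Complex.sub_im, Complex.mul_re, Complex.mul_im]
  ring

lemma g_para (hex : ∃ φ : A →L[ℂ] ℂ, IsState A φ) (hb : 0 < crawford b)
    (a : A) (ζ lam : ℂ) :
    2 * nr (a + ζ • b) ^ 2 + 2 * ‖lam‖ ^ 2 * crawford b ^ 2 ≤
      nr (a + (ζ + lam) • b) ^ 2 + nr (a + (ζ - lam) • b) ^ 2 := by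
  set M : ℝ := (nr (a + (ζ + lam) • b) ^ 2 + nr (a + (ζ - lam) • b) ^ 2) / 2
      - ‖lam‖ ^ 2 * crawford b ^ 2 with hM
  have pointwise : ∀ φ : A →L[ℂ] ℂ, IsState A φ → ‖φ (a + ζ • b)‖ ^ 2 ≤ M := by
    intro φ hφ
    have e1 : φ (a + (ζ + lam) • b) = φ (a + ζ • b) + lam * φ b := by
      rw [add_smul, ← add_assoc, map_add, map_smul, smul_eq_mul]
    have e2 : φ (a + (ζ - lam) • b) = φ (a + ζ • b) - lam * φ b := by
      have e : a + (ζ - lam) • b = (a + ζ • b) - lam • b := by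
        rw [sub_smul, add_sub_assoc]
      rw [e, map_sub, map_smul, smul_eq_mul]
    have h1 : ‖φ (a + ζ • b) + lam * φ b‖ ^ 2 ≤ nr (a + (ζ + lam) • b) ^ 2 := by
      refine pow_le_pow_left₀ (norm_nonneg _) ?_ 2
      rw [← e1]; exact abs_le_nr hφ _
    have h2 : ‖φ (a + ζ • b) - lam * φ b‖ ^ 2 ≤ nr (a + (ζ - lam) • b) ^ 2 := by
      refine pow_le_pow_left₀ (norm_nonneg _) ?_ 2
      rw [← e2]; exact abs_le_nr hφ _
    have hC : crawford b ^ 2 ≤ ‖φ b‖ ^ 2 :=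
      pow_le_pow_left₀ hb.le (crawford_le hφ b) 2
    have hpara := para (φ (a + ζ • b)) (φ b) lam
    have hl2 : (0:ℝ) ≤ ‖lam‖ ^ 2 := sq_nonneg _
    have hprod := mul_le_mul_of_nonneg_left hC hl2
    rw [hM]
    linarith
  obtain ⟨φ₀, hφ₀⟩ := hex
  have hM0 : 0 ≤ M := le_trans (sq_nonneg _) (pointwise φ₀ hφ₀)
  have h1 : nr (a + ζ • b) ≤ Real.sqrt M := by
    refine nr_le ⟨φ₀, hφ₀⟩ fun φ hφ => ?_
    exact (Real.le_sqrt (norm_nonneg _) hM0).mpr (pointwise φ hφ)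
  have h2 : nr (a + ζ • b) ^ 2 ≤ M := by
    calc nr (a + ζ • b) ^ 2 ≤ Real.sqrt M ^ 2 :=
          pow_le_pow_left₀ (nr_nonneg hφ₀ _) h1 2
      _ = M := Real.sq_sqrt hM0
  rw [hM] at h2; linarith


/-- the function `ζ ↦ nr (a + ζ • b)` is continuous -/
lemma cont_f (hex : ∃ φ : A →L[ℂ] ℂ, IsState A φ) (a b : A) :
    Continuous fun ζ : ℂ => nr (a + ζ • b) := by
  have key : ∀ ζ ζ' : ℂ, nr (a + ζ • b) ≤ nr (a + ζ' • b) + ‖ζ - ζ'‖ * ‖b‖ := by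
    intro ζ ζ'
    have e : a + ζ • b = (a + ζ' • b) + (ζ - ζ') • b := by
      rw [sub_smul]; abel
    rw [e]
    refine le_trans (nr_add_le hex _ _) (add_le_add_right ?_ _)
    calc nr ((ζ - ζ') • b) ≤ ‖(ζ - ζ') • b‖ := nr_le_norm hex _
      _ = ‖ζ - ζ'‖ * ‖b‖ := by rw [norm_smul]
  refine (LipschitzWith.of_dist_le_mul (K := ⟨‖b‖, norm_nonneg b⟩)
    (f := fun ζ : ℂ => nr (a + ζ • b)) ?_).continuous
  intro x y
  rw [Real.dist_eq, Complex.dist_eq]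
  rw [abs_sub_le_iff]
  constructor
  · have := key x y
    have h2 : ‖x - y‖ * ‖b‖ = ‖b‖ * ‖x - y‖ := mul_comm _ _
    change _ ≤ ‖b‖ * ‖x - y‖
    linarith [key x y]
  · have h3 : ‖y - x‖ = ‖x - y‖ := by
      rw [← norm_neg, neg_sub]
    have h4 : ‖y - x‖ * ‖b‖ = ‖b‖ * ‖x - y‖ := by
      rw [h3, mul_comm]
    change _ ≤ ‖b‖ * ‖x - y‖
    linarith [key y x, h4]

/-- existence of a global minimizer -/
lemma exists_min (hex : ∃ φ : A →L[ℂ] ℂ, IsState A φ) {b : A} (hb : 0 < crawford b) (a : A) :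
    ∃ ζ₀ : ℂ, ∀ ζ : ℂ, nr (a + ζ₀ • b) ≤ nr (a + ζ • b) := by
  obtain ⟨φ₀, hφ₀⟩ := hex
  set C := crawford b with hC
  set f : ℂ → ℝ := fun ζ => nr (a + ζ • b) with hf
  have low : ∀ ζ : ℂ, ‖ζ‖ * C - ‖φ₀ a‖ ≤ f ζ := by
    intro ζ
    have e : φ₀ (a + ζ • b) = φ₀ a + ζ * φ₀ b := by rw [map_add, map_smul, smul_eq_mul]
    have h1 : ‖ζ * φ₀ b‖ - ‖φ₀ a‖ ≤ ‖φ₀ a + ζ * φ₀ b‖ := by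
      have h := norm_add_le (φ₀ a + ζ * φ₀ b) (-(φ₀ a))
      have e2 : φ₀ a + ζ * φ₀ b + -(φ₀ a) = ζ * φ₀ b := by ring
      rw [e2, norm_neg] at h
      linarith
    have h2 : ‖ζ‖ * C ≤ ‖ζ * φ₀ b‖ := by
      rw [norm_mul]
      exact mul_le_mul_of_nonneg_left (crawford_le hφ₀ b) (norm_nonneg ζ)
    have h3 : ‖φ₀ (a + ζ • b)‖ ≤ f ζ := abs_le_nr hφ₀ _
    rw [e] at h3
    linarith
  set R : ℝ := (‖φ₀ a‖ + f 0 + 1) / C with hR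
  have hf00 : 0 ≤ f 0 := nr_nonneg hφ₀ _
  have hR0 : 0 ≤ R := by positivity
  obtain ⟨ζ₀, hmem, hmin⟩ := (isCompact_closedBall (0:ℂ) R).exists_isMinOn
    ⟨0, Metric.mem_closedBall_self hR0⟩ ((cont_f ⟨φ₀, hφ₀⟩ a b).continuousOn)
  refine ⟨ζ₀, fun ζ => ?_⟩
  by_cases hζ : ζ ∈ Metric.closedBall (0:ℂ) R
  · exact hmin hζ
  · have h0 : f ζ₀ ≤ f 0 := hmin (Metric.mem_closedBall_self hR0)
    have hout : R < ‖ζ‖ := by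
      rw [Metric.mem_closedBall, dist_zero_right, not_le] at hζ
      exact hζ
    have hRC : R * C = ‖φ₀ a‖ + f 0 + 1 := by
      rw [hR, div_mul_cancel₀ _ (ne_of_gt hb)]
    have : f 0 + 1 ≤ f ζ := by
      have := low ζ
      have h4 : R * C ≤ ‖ζ‖ * C := mul_le_mul_of_nonneg_right hout.le hb.le
      linarith
    linarith


end Stmt16Aux

open Stmt16Aux

variable {A : Type*} [CStarAlgebra A]

theorem stmt16 (a b : A) (hb : 0 < crawford b) :
    ∃! ζ : ℂ, ∀ lam : ℂ,
      nr (a + ζ • b) ^ 2 + ‖lam‖ ^ 2 * crawford b ^ 2 ≤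
        nr ((a + ζ • b) + lam • b) ^ 2 := by
  have hex : ∃ φ : A →L[ℂ] ℂ, IsState A φ := by
    by_contra h
    push_neg at h
    have he : {r : ℝ | ∃ φ : A →L[ℂ] ℂ, IsState A φ ∧ r = ‖φ b‖} = ∅ := by
      ext r; simp only [Set.mem_setOf_eq, Set.mem_empty_iff_false, iff_false]
      rintro ⟨φ, hφ, -⟩; exact h φ hφ
    rw [crawford, he, Real.sInf_empty] at hb
    exact lt_irrefl 0 hb
  obtain ⟨φ₀, hφ₀⟩ := hex
  have hex : ∃ φ : A →L[ℂ] ℂ, IsState A φ := ⟨φ₀, hφ₀⟩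
  obtain ⟨ζ₀, hmin⟩ := exists_min hex hb a
  set C := crawford b with hC
  set g : ℂ → ℝ := fun ζ => nr (a + ζ • b) ^ 2 with hg
  have gmin : ∀ lam : ℂ, g ζ₀ ≤ g (ζ₀ + lam) :=
    fun lam => pow_le_pow_left₀ (nr_nonneg hφ₀ _) (hmin _) 2
  -- iteration
  have iter : ∀ n : ℕ, ∀ lam : ℂ,
      g ζ₀ + (1 - (1/2:ℝ)^n) * (‖lam‖ ^ 2 * C ^ 2) ≤ g (ζ₀ + lam) := by
    intro n
    induction n with
    | zero => intro lam; simpa using gmin lam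
    | succ n ih =>
      intro lam
      have h1 := g_para hex hb a (ζ₀ + lam/2) (lam/2)
      have e1 : ζ₀ + lam/2 + lam/2 = ζ₀ + lam := by ring
      have e2 : ζ₀ + lam/2 - lam/2 = ζ₀ := by ring
      rw [e1, e2] at h1
      have h2 := ih (lam/2)
      have habs : ‖lam/2‖ ^ 2 = ‖lam‖ ^ 2 / 4 := by
        rw [norm_div, Complex.norm_two, div_pow]
        norm_num
      rw [habs] at h1 h2
      have h1' : 2 * g (ζ₀ + lam/2) + 2 * (‖lam‖ ^ 2 / 4) * C ^ 2 ≤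
          g (ζ₀ + lam) + g ζ₀ := h1
      have hpow : ((1:ℝ)/2)^(n+1) = (1/2)^n / 2 := by rw [pow_succ]; ring
      rw [hpow]
      linarith [h1', h2]
  have main : ∀ lam : ℂ, g ζ₀ + ‖lam‖ ^ 2 * C ^ 2 ≤ g (ζ₀ + lam) := by
    intro lam
    have hlim : Filter.Tendsto
        (fun n : ℕ => g ζ₀ + (1 - (1/2:ℝ)^n) * (‖lam‖ ^ 2 * C ^ 2))
        Filter.atTop (nhds (g ζ₀ + (1 - 0) * (‖lam‖ ^ 2 * C ^ 2))) := by
      exact (((tendsto_pow_atTop_nhds_zero_of_lt_one (by norm_num) (by norm_num)).const_sub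
        1).mul_const _).const_add _
    have := le_of_tendsto' hlim (fun n => iter n lam)
    simpa using this
  have key : ∀ ζ lam : ℂ, a + ζ • b + lam • b = a + (ζ + lam) • b := by
    intro ζ lam; rw [add_smul]; abel
  refine ⟨ζ₀, fun lam => ?_, fun ζ' h' => ?_⟩
  · rw [key]
    exact main lam
  · have h1 := h' (ζ₀ - ζ')
    rw [key] at h1
    have e1 : ζ' + (ζ₀ - ζ') = ζ₀ := by ring
    rw [e1] at h1
    have h2 := main (ζ' - ζ₀)
    have e2 : ζ₀ + (ζ' - ζ₀) = ζ' := by ring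
    rw [e2] at h2
    have habs : ‖ζ₀ - ζ'‖ = ‖ζ' - ζ₀‖ := by
      rw [← norm_neg, neg_sub]
    rw [habs] at h1
    have h1' : g ζ' + ‖ζ' - ζ₀‖ ^ 2 * C ^ 2 ≤ g ζ₀ := h1
    have hzero : ‖ζ' - ζ₀‖ ^ 2 * C ^ 2 ≤ 0 := by linarith
    have habs2 : ‖ζ' - ζ₀‖ ^ 2 = 0 := by
      by_contra hne
      have hpos : 0 < ‖ζ' - ζ₀‖ ^ 2 := lt_of_le_of_ne (sq_nonneg _) (Ne.symm hne)
      have := mul_pos hpos (pow_pos hb 2)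
      linarith
    have habs0 : ‖ζ' - ζ₀‖ = 0 := by
      have := sq_eq_zero_iff.mp habs2
      exact this
    have : ζ' - ζ₀ = 0 := norm_eq_zero.mp habs0
    linear_combination this
end

section
/- Let A be a unital C*-algebra and b∈A with C(b) > 0. Then every a ∈ A not in span{b} has a unique best approximation in span{b} with respect to the numerical radius norm: there is a unique b_a ∈ span{b} with v(a − b_a) = dist_v(a, span{b}), and v(a − p) > v(a − b_a) for all p ∈ span{b}, p ≠ b_a. -/
open scoped ComplexOrder

variable {A : Type*} [CStarAlgebra A]

namespace Stmt17Aux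

lemma stateSet_bddAbove (x : A) :
    BddAbove {r : ℝ | ∃ φ : A →L[ℂ] ℂ, IsState A φ ∧ r = ‖φ x‖} := by
  refine ⟨‖x‖, ?_⟩
  rintro r ⟨ψ, hψ, rfl⟩
  calc ‖ψ x‖ = ‖ψ x‖ := rfl
    _ ≤ ‖ψ‖ * ‖x‖ := ψ.le_opNorm x
    _ = ‖x‖ := by rw [hψ.2.2, one_mul]

lemma state_abs_le_nr {φ : A →L[ℂ] ℂ} (hφ : IsState A φ) (x : A) :
    ‖φ x‖ ≤ nr x :=
  le_csSup (stateSet_bddAbove x) ⟨φ, hφ, rfl⟩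

lemma crawford_le_state {φ : A →L[ℂ] ℂ} (hφ : IsState A φ) (b : A) :
    crawford b ≤ ‖φ b‖ := by
  refine csInf_le ⟨0, ?_⟩ ⟨φ, hφ, rfl⟩
  rintro r ⟨ψ, hψ, rfl⟩
  exact norm_nonneg _

lemma exists_state_of_crawford_pos {b : A} (hb : 0 < crawford b) :
    ∃ φ : A →L[ℂ] ℂ, IsState A φ := by
  by_contra h
  push_neg at h
  have : {r : ℝ | ∃ φ : A →L[ℂ] ℂ, IsState A φ ∧ r = ‖φ b‖} = ∅ := by
    ext r; simp only [Set.mem_setOf_eq, Set.mem_empty_iff_false, iff_false]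
    rintro ⟨φ, hφ, -⟩; exact h φ hφ
  rw [crawford, this, Real.sInf_empty] at hb
  exact lt_irrefl 0 hb

lemma nr_nonneg (hS : ∃ φ : A →L[ℂ] ℂ, IsState A φ) (x : A) : 0 ≤ nr x := by
  obtain ⟨φ, hφ⟩ := hS
  exact le_trans (norm_nonneg _) (state_abs_le_nr hφ x)

lemma nr_le {x : A} {c : ℝ} (hc : 0 ≤ c)
    (h : ∀ φ : A →L[ℂ] ℂ, IsState A φ → ‖φ x‖ ≤ c) : nr x ≤ c := by
  apply Real.sSup_le _ hc
  rintro r ⟨φ, hφ, rfl⟩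
  exact h φ hφ

lemma nr_add_le (hS : ∃ φ : A →L[ℂ] ℂ, IsState A φ) (x y : A) :
    nr (x + y) ≤ nr x + nr y := by
  refine nr_le (add_nonneg (nr_nonneg hS x) (nr_nonneg hS y)) ?_
  · intro φ hφ
    calc ‖φ (x + y)‖ = ‖φ x + φ y‖ := by rw [map_add]
      _ ≤ ‖φ x‖ + ‖φ y‖ := norm_add_le _ _
      _ ≤ nr x + nr y := add_le_add (state_abs_le_nr hφ x) (state_abs_le_nr hφ y)

lemma nr_smul_le (hS : ∃ φ : A →L[ℂ] ℂ, IsState A φ) (c : ℂ) (x : A) :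
    nr (c • x) ≤ ‖c‖ * nr x := by
  refine nr_le (by have := nr_nonneg hS x; positivity) ?_
  intro φ hφ
  calc ‖φ (c • x)‖ = ‖c‖ * ‖φ x‖ := by
        rw [map_smul, smul_eq_mul, norm_mul]
    _ ≤ ‖c‖ * nr x := by
        exact mul_le_mul_of_nonneg_left (state_abs_le_nr hφ x) (norm_nonneg c)

/-- The key uniqueness lemma. -/
lemma key {b : A} (hb : 0 < crawford b) (x y : A) (μ : ℂ) (hμ : μ ≠ 0)
    (hxy : y - x = μ • b) (d : ℝ) (hx : nr x ≤ d) (hy : nr y ≤ d)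
    (hm : d ≤ nr ((2:ℂ)⁻¹ • (x + y))) : False := by
  have hS : ∃ φ : A →L[ℂ] ℂ, IsState A φ := exists_state_of_crawford_pos hb
  have hd0 : 0 ≤ d := le_trans (nr_nonneg hS x) hx
  set C := crawford b with hC
  -- case d = 0
  rcases eq_or_lt_of_le hd0 with hd | hd
  · obtain ⟨φ, hφ⟩ := hS
    have h1 : ‖φ x‖ ≤ 0 := le_trans (state_abs_le_nr hφ x) (hx.trans hd.ge)
    have h2 : ‖φ y‖ ≤ 0 := le_trans (state_abs_le_nr hφ y) (hy.trans hd.ge)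
    have hx0 : φ x = 0 := by
      have := norm_nonneg (φ x); simpa using norm_eq_zero.mp (le_antisymm h1 this)
    have hy0 : φ y = 0 := by
      have := norm_nonneg (φ y); simpa using norm_eq_zero.mp (le_antisymm h2 this)
    have : μ * φ b = 0 := by
      have := congrArg φ hxy
      rw [map_sub, map_smul, hx0, hy0, smul_eq_mul] at this
      linear_combination -this
    have hb0 : φ b = 0 := by
      rcases mul_eq_zero.mp this with h | h
      · exact absurd h hμ
      · exact h
    have := crawford_le_state hφ b
    rw [hb0] at this
    simp only [map_zero, norm_zero] at this
    exact absurd (lt_of_lt_of_le hb this) (lt_irrefl 0)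
  -- case d > 0
  have hv : 0 < ‖μ‖ ^ 2 * C ^ 2 := by
    have : 0 < ‖μ‖ := norm_pos_iff.mpr hμ
    positivity
  set ε : ℝ := min (d / 2) (‖μ‖ ^ 2 * C ^ 2 / (8 * d)) with hε
  have hε0 : 0 < ε := by
    apply lt_min (by linarith)
    positivity
  have hεd : ε < d := lt_of_le_of_lt (min_le_left _ _) (by linarith)
  -- get a state nearly attaining nr of the midpoint
  have hne : {r : ℝ | ∃ φ : A →L[ℂ] ℂ, IsState A φ ∧
      r = ‖φ ((2:ℂ)⁻¹ • (x + y))‖}.Nonempty := by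
    obtain ⟨φ, hφ⟩ := hS; exact ⟨_, φ, hφ, rfl⟩
  obtain ⟨r, ⟨φ, hφ, rfl⟩, hr⟩ :=
    exists_lt_of_lt_csSup hne (show d - ε < nr ((2:ℂ)⁻¹ • (x + y)) from by
      calc d - ε < d := by linarith
        _ ≤ _ := hm)
  set u := φ x with hu
  set w := φ y with hw
  have hmid : φ ((2:ℂ)⁻¹ • (x + y)) = (2:ℂ)⁻¹ * (u + w) := by
    rw [map_smul, map_add, smul_eq_mul]
  have huw : d - ε < ‖(2:ℂ)⁻¹ * (u + w)‖ := by rwa [hmid] at hr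
  have habs : ‖(2:ℂ)⁻¹ * (u + w)‖ = ‖u + w‖ / 2 := by
    rw [norm_mul, norm_inv]
    have h2n : ‖(2:ℂ)‖ = 2 := by simp
    rw [h2n]; ring
  have hsum : 2 * (d - ε) < ‖u + w‖ := by
    rw [habs] at huw; linarith
  have hun : ‖u‖ ≤ d := by
    have h := state_abs_le_nr hφ x
    exact le_trans h hx
  have hwn : ‖w‖ ≤ d := by
    have h := state_abs_le_nr hφ y
    exact le_trans h hy
  have hpar := parallelogram_law_with_norm ℂ u w
  have hdiff : ‖μ‖ * C ≤ ‖u - w‖ := by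
    have h1 : w - u = μ * φ b := by
      have := congrArg φ hxy
      rw [map_sub, map_smul, smul_eq_mul] at this
      rw [hu, hw]; linear_combination this
    have h2 : ‖u - w‖ = ‖μ‖ * ‖φ b‖ := by
      rw [← norm_neg, neg_sub, h1, norm_mul]
    rw [h2]
    apply mul_le_mul_of_nonneg_left _ (norm_nonneg μ)
    have h := crawford_le_state hφ b
    exact h
  -- numeric contradiction
  have hd_eps : 0 ≤ d - ε := by linarith
  have hsum2 : (2 * (d - ε)) ^ 2 < ‖u + w‖ ^ 2 := by
    apply pow_lt_pow_left₀ hsum (by positivity)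
    norm_num
  have hdiff2 : (‖μ‖ * C) ^ 2 ≤ ‖u - w‖ ^ 2 := by
    apply pow_le_pow_left₀ (by positivity) hdiff
  have hε_le : ε ≤ ‖μ‖ ^ 2 * C ^ 2 / (8 * d) := min_le_right _ _
  have h8 : 8 * d * ε ≤ ‖μ‖ ^ 2 * C ^ 2 := by
    rw [div_eq_inv_mul] at hε_le
    have h8d : (0:ℝ) < 8 * d := by linarith
    calc 8 * d * ε ≤ 8 * d * ((8 * d)⁻¹ * (‖μ‖ ^ 2 * C ^ 2)) := by
          exact mul_le_mul_of_nonneg_left hε_le (by linarith)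
      _ = ‖μ‖ ^ 2 * C ^ 2 := by field_simp
  nlinarith [sq_nonneg ε, sq_nonneg (‖u‖ - d), sq_nonneg (‖w‖ - d), norm_nonneg u, norm_nonneg w]

end Stmt17Aux

open Stmt17Aux in
theorem stmt17 (a b : A) (hb : 0 < crawford b)
    (ha : a ∉ (Submodule.span ℂ {b} : Submodule ℂ A)) :
    ∃ ba ∈ (Submodule.span ℂ {b} : Submodule ℂ A),
      nr (a - ba) = sInf ((fun p => nr (a - p)) '' (Submodule.span ℂ {b} : Submodule ℂ A)) ∧
      ∀ p ∈ (Submodule.span ℂ {b} : Submodule ℂ A), p ≠ ba → nr (a - ba) < nr (a - p) := by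
  have hS : ∃ φ : A →L[ℂ] ℂ, IsState A φ := exists_state_of_crawford_pos hb
  set C := crawford b with hC
  set f : ℂ → ℝ := fun lam => nr (a - lam • b) with hf
  -- f is Lipschitz hence continuous
  have hlip : LipschitzWith (Real.toNNReal ‖b‖) f := by
    apply LipschitzWith.of_dist_le_mul
    intro l1 l2
    have key : ∀ s t : ℂ, f s - f t ≤ ‖b‖ * dist s t := by
      intro s t
      have h1 : a - s • b = (a - t • b) + (t - s) • b := by
        rw [sub_smul]; abel
      have h2 : f s ≤ f t + ‖t - s‖ * nr b := by
        rw [hf]; dsimp only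
        rw [h1]
        exact le_trans (nr_add_le hS _ _) (by gcongr; exact nr_smul_le hS _ _)
      have h3 : nr b ≤ ‖b‖ := by
        refine nr_le (norm_nonneg b) ?_
        intro φ hφ
        calc ‖φ b‖ = ‖φ b‖ := rfl
          _ ≤ ‖φ‖ * ‖b‖ := φ.le_opNorm b
          _ = ‖b‖ := by rw [hφ.2.2, one_mul]
      have h4 : ‖t - s‖ = dist s t := by rw [dist_comm, dist_eq_norm]
      nlinarith [norm_nonneg (t - s), nr_nonneg hS b, dist_nonneg (x := s) (y := t)]
    rw [Real.dist_eq, Real.coe_toNNReal _ (norm_nonneg b)]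
    have k2 := key l2 l1
    rw [dist_comm l2 l1] at k2
    exact abs_sub_le_iff.mpr ⟨key l1 l2, k2⟩
  have hcont : Continuous f := hlip.continuous
  -- coercivity
  have hcoer : ∀ lam : ℂ, ‖lam‖ * C - nr a ≤ f lam := by
    intro lam
    obtain ⟨φ, hφ⟩ := hS
    have h1 : ‖φ (a - lam • b)‖ ≤ f lam := state_abs_le_nr hφ _
    have h2 : φ (a - lam • b) = φ a - lam * φ b := by rw [map_sub, map_smul, smul_eq_mul]
    have h3 : ‖lam * φ b‖ - ‖φ a‖ ≤ ‖φ a - lam * φ b‖ := by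
      have := norm_sub_norm_le (lam * φ b) (φ a)
      rw [← norm_neg (lam * φ b - φ a), neg_sub] at this
      linarith
    have h4 : ‖lam‖ * C ≤ ‖lam * φ b‖ := by
      rw [norm_mul]
      apply mul_le_mul_of_nonneg_left _ (norm_nonneg lam)
      have h := crawford_le_state hφ b
      exact h
    have h5 : ‖φ a‖ ≤ nr a := by
      have h := state_abs_le_nr hφ a
      exact h
    have h6 : ‖φ (a - lam • b)‖ = ‖φ a - lam * φ b‖ := by
      rw [h2]
    linarith [h1, h6 ▸ h1]
  -- existence of a global minimizer
  set R : ℝ := (f 0 + nr a) / C + 1 with hR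
  have hR0 : 0 ≤ R := by
    have h1 : 0 ≤ f 0 := nr_nonneg hS _
    have h2 : 0 ≤ nr a := nr_nonneg hS a
    have h3 : 0 ≤ (f 0 + nr a) / C := by positivity
    calc (0:ℝ) ≤ (f 0 + nr a) / C + 1 := by linarith
      _ = R := hR.symm
  obtain ⟨lam0, hlam0mem, hlam0⟩ :=
    (isCompact_closedBall (0:ℂ) R).exists_isMinOn
      ⟨0, Metric.mem_closedBall_self hR0⟩ hcont.continuousOn
  have hmin : ∀ lam : ℂ, f lam0 ≤ f lam := by
    intro lam
    by_cases hmem : lam ∈ Metric.closedBall (0:ℂ) R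
    · exact hlam0 hmem
    · have hout : R < ‖lam‖ := by
        simpa [Metric.mem_closedBall, dist_zero_right] using not_le.mp
          (by simpa [Metric.mem_closedBall, dist_zero_right] using hmem)
      have h1 : f 0 ≤ ‖lam‖ * C - nr a := by
        have : R * C < ‖lam‖ * C := by exact mul_lt_mul_of_pos_right hout hb
        have hRC : R * C = f 0 + nr a + C := by
          rw [hR]; field_simp
        nlinarith
      calc f lam0 ≤ f 0 := hlam0 (Metric.mem_closedBall_self hR0)
        _ ≤ ‖lam‖ * C - nr a := h1
        _ ≤ f lam := hcoer lam
  -- b ≠ 0 ⇒ smul injective coefficients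
  have hbne : b ≠ 0 := by
    rintro rfl
    obtain ⟨φ, hφ⟩ := hS
    have := crawford_le_state hφ (0 : A)
    simp only [map_zero, norm_zero] at this
    exact absurd (lt_of_lt_of_le hb this) (lt_irrefl 0)
  refine ⟨lam0 • b, Submodule.smul_mem _ _ (Submodule.mem_span_singleton_self b), ?_, ?_⟩
  · -- infimum formula
    apply le_antisymm
    · apply le_csInf
      · exact ⟨nr (a - lam0 • b), ⟨lam0 • b,
          Submodule.smul_mem _ _ (Submodule.mem_span_singleton_self b), rfl⟩⟩
      · rintro r ⟨p, hp, rfl⟩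
        obtain ⟨c, rfl⟩ := Submodule.mem_span_singleton.mp hp
        exact hmin c
    · apply csInf_le
      · refine ⟨0, ?_⟩
        rintro r ⟨p, hp, rfl⟩
        exact nr_nonneg hS _
      · exact ⟨lam0 • b,
          Submodule.smul_mem _ _ (Submodule.mem_span_singleton_self b), rfl⟩
  · -- uniqueness
    intro p hp hpne
    obtain ⟨c, rfl⟩ := Submodule.mem_span_singleton.mp hp
    by_contra hcon
    push_neg at hcon
    have heq : nr (a - c • b) = nr (a - lam0 • b) := le_antisymm hcon (hmin c)
    have hcne : lam0 - c ≠ 0 := by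
      intro h
      apply hpne
      have : lam0 = c := by linear_combination h
      rw [this]
    refine key hb (a - lam0 • b) (a - c • b) (lam0 - c) hcne ?_ (nr (a - lam0 • b)) le_rfl heq.le ?_
    · rw [sub_smul]; abel
    · -- midpoint
      have hmid : (2:ℂ)⁻¹ • ((a - lam0 • b) + (a - c • b)) = a - ((2:ℂ)⁻¹ * (lam0 + c)) • b := by
        module
      rw [hmid]
      exact hmin _
end
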